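/- arXiv:1708.02506 — 7 statements merged into one kernel-verified Lean document; each statement's English description precedes it below -/
import Mathlib

section
/- Let g₀(x) = -1/x and g₁(x) = -x. For each j ∈ {0,1} there exists a permutation σ_j of {0,1,…,8} such that for every irrational real number x and every i ∈ {0,…,8}, h_i(g_j(x)) = g_j(h_{σ_j(i)}(x)). Consequently, if M is a random matrix uniformly distributed on {E₀,…,E₈} and x is irrational, then h_M(g_j(x)) and g_j(h_M(x)) have the same distribution. -/
open MeasureTheory ProbabilityTheory Filter
open scoped ENNReal

noncomputable def hMap : Fin 9 → ℝ → ℝ :=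
  ![fun x => -x⁻¹,
    fun x => 1 + x,
    fun x => x - 1,
    fun x => 1 - x⁻¹,
    fun x => -1 - x⁻¹,
    fun x => x / (1 + x),
    fun x => x / (1 - x),
    fun x => -(1 + x)⁻¹,
    fun x => (1 - x)⁻¹]

noncomputable def Cfun (x : ℝ) : ℝ := min |x| |x|⁻¹

noncomputable def HMap : Fin 5 → ℝ → ℝ :=
  ![fun x => x,
    fun x => (1 + x)⁻¹,
    fun x => 1 - x,
    fun x => min (x / (1 - x)) ((1 - x) / x),
    fun x => x / (1 + x)]

noncomputable def cfVal (k : ℕ → ℕ) : ℝ :=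
  limUnder atTop (fun n => (((List.range n).map k).foldr (fun a r => ((a : ℝ) + r)⁻¹) 0))

noncomputable def geomHalf : Measure ℕ :=
  Measure.sum (fun n => ((2 : ℝ≥0∞) ^ (n + 1))⁻¹ • Measure.dirac (n + 1))

noncomputable def bern : Measure ℝ :=
  (2 : ℝ≥0∞)⁻¹ • (Measure.dirac 1 + Measure.dirac (-1))

/-- `μ` is the law of the random continued fraction `[K₁,K₂,…]` with `Kᵢ` i.i.d.
geometric of parameter `1/2` (mass `2⁻ⁿ` at `n ≥ 1`). -/
def IsMuStar (μ : Measure ℝ) : Prop :=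
  ∃ (Ω : Type) (_ : MeasurableSpace Ω) (P : Measure Ω) (K : ℕ → Ω → ℕ),
    IsProbabilityMeasure P ∧ (∀ i, Measurable (K i)) ∧
    iIndepFun K P ∧
    (∀ i, P.map (K i) = geomHalf) ∧
    μ = P.map (fun ω => cfVal (fun i => K i ω))

noncomputable def gaussIter : ℕ → ℝ → ℝ
  | 0, x => x
  | n + 1, x => gaussIter n (Int.fract x⁻¹)

/-- the `n`-th digit (starting at `n = 0`) of the continued fraction expansion of `x ∈ (0,1)`. -/
noncomputable def cfDigit (x : ℝ) (n : ℕ) : ℕ := ⌊(gaussIter n x)⁻¹⌋₊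

/-- the Denjoy–Minkowski function of parameter 1/2. -/
noncomputable def chiHalf (y : ℝ) : ℝ :=
  ∑' n : ℕ, (-1 : ℝ) ^ n *
    (2 : ℝ) ^ (-(⌊y⌋ + ∑ j ∈ Finset.range n, (cfDigit (Int.fract y) j : ℤ)))

/-- Minkowski's question mark function evaluated at `[k₁,k₂,…]`. -/
noncomputable def qmark (k : ℕ → ℕ) : ℝ :=
  2 * ∑' n : ℕ, (-1 : ℝ) ^ n * (2 : ℝ) ^ (-(∑ j ∈ Finset.range (n + 1), (k j : ℤ)))

noncomputable def gMap : Fin 2 → ℝ → ℝ := ![fun x => -x⁻¹, fun x => -x]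

noncomputable def unifNine : Measure (Fin 9) := (PMF.uniformOfFintype (Fin 9)).toMeasure


def sig0 : Fin 9 → Fin 9 := ![0, 6, 5, 7, 8, 2, 1, 3, 4]
def sig1 : Fin 9 → Fin 9 := ![0, 2, 1, 4, 3, 6, 5, 8, 7]
def perm0 : Equiv.Perm (Fin 9) := ⟨sig0, sig0, by decide, by decide⟩
def perm1 : Equiv.Perm (Fin 9) := ⟨sig1, sig1, by decide, by decide⟩

lemma e00 (x : ℝ) (h0 : x ≠ 0) (h1' : 1 + x ≠ 0) (h2' : 1 - x ≠ 0) (h3' : x - 1 ≠ 0) (h4' : -1 + x ≠ 0) (h5' : -1 - x ≠ 0) (h6' : 1 - x⁻¹ ≠ 0) (h7' : 1 + x⁻¹ ≠ 0) (h8' : -1 - x⁻¹ ≠ 0) :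
    -(-x⁻¹)⁻¹ = -(-x⁻¹)⁻¹ := by
  field_simp [h0, h1', h2', h3', h4', h5', h6', h7', h8'] <;> try ring

lemma e01 (x : ℝ) (h0 : x ≠ 0) (h1' : 1 + x ≠ 0) (h2' : 1 - x ≠ 0) (h3' : x - 1 ≠ 0) (h4' : -1 + x ≠ 0) (h5' : -1 - x ≠ 0) (h6' : 1 - x⁻¹ ≠ 0) (h7' : 1 + x⁻¹ ≠ 0) (h8' : -1 - x⁻¹ ≠ 0) :
    1 + (-x⁻¹) = -(x / (1 - x))⁻¹ := by
  field_simp [h0, h1', h2', h3', h4', h5', h6', h7', h8'] <;> try ring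

lemma e02 (x : ℝ) (h0 : x ≠ 0) (h1' : 1 + x ≠ 0) (h2' : 1 - x ≠ 0) (h3' : x - 1 ≠ 0) (h4' : -1 + x ≠ 0) (h5' : -1 - x ≠ 0) (h6' : 1 - x⁻¹ ≠ 0) (h7' : 1 + x⁻¹ ≠ 0) (h8' : -1 - x⁻¹ ≠ 0) :
    (-x⁻¹) - 1 = -(x / (1 + x))⁻¹ := by
  field_simp [h0, h1', h2', h3', h4', h5', h6', h7', h8'] <;> try ring

lemma e03 (x : ℝ) (h0 : x ≠ 0) (h1' : 1 + x ≠ 0) (h2' : 1 - x ≠ 0) (h3' : x - 1 ≠ 0) (h4' : -1 + x ≠ 0) (h5' : -1 - x ≠ 0) (h6' : 1 - x⁻¹ ≠ 0) (h7' : 1 + x⁻¹ ≠ 0) (h8' : -1 - x⁻¹ ≠ 0) :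
    1 - (-x⁻¹)⁻¹ = -(-(1 + x)⁻¹)⁻¹ := by
  field_simp [h0, h1', h2', h3', h4', h5', h6', h7', h8'] <;> try ring

lemma e04 (x : ℝ) (h0 : x ≠ 0) (h1' : 1 + x ≠ 0) (h2' : 1 - x ≠ 0) (h3' : x - 1 ≠ 0) (h4' : -1 + x ≠ 0) (h5' : -1 - x ≠ 0) (h6' : 1 - x⁻¹ ≠ 0) (h7' : 1 + x⁻¹ ≠ 0) (h8' : -1 - x⁻¹ ≠ 0) :
    -1 - (-x⁻¹)⁻¹ = -((1 - x)⁻¹)⁻¹ := by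
  field_simp [h0, h1', h2', h3', h4', h5', h6', h7', h8'] <;> try ring

lemma e05 (x : ℝ) (h0 : x ≠ 0) (h1' : 1 + x ≠ 0) (h2' : 1 - x ≠ 0) (h3' : x - 1 ≠ 0) (h4' : -1 + x ≠ 0) (h5' : -1 - x ≠ 0) (h6' : 1 - x⁻¹ ≠ 0) (h7' : 1 + x⁻¹ ≠ 0) (h8' : -1 - x⁻¹ ≠ 0) :
    (-x⁻¹) / (1 + (-x⁻¹)) = -(x - 1)⁻¹ := by
  rw [show (1 + (-x⁻¹) : ℝ) = 1 - x⁻¹ by ring,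
      show (-(x - 1)⁻¹ : ℝ) = (-1) / (x - 1) by rw [neg_div, one_div],
      div_eq_div_iff h6' h3']
  field_simp
  try ring

lemma e06 (x : ℝ) (h0 : x ≠ 0) (h1' : 1 + x ≠ 0) (h2' : 1 - x ≠ 0) (h3' : x - 1 ≠ 0) (h4' : -1 + x ≠ 0) (h5' : -1 - x ≠ 0) (h6' : 1 - x⁻¹ ≠ 0) (h7' : 1 + x⁻¹ ≠ 0) (h8' : -1 - x⁻¹ ≠ 0) :
    (-x⁻¹) / (1 - (-x⁻¹)) = -(1 + x)⁻¹ := by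
  rw [show (1 - (-x⁻¹) : ℝ) = 1 + x⁻¹ by ring,
      show (-(1 + x)⁻¹ : ℝ) = (-1) / (1 + x) by rw [neg_div, one_div],
      div_eq_div_iff h7' h1']
  field_simp
  try ring

lemma e07 (x : ℝ) (h0 : x ≠ 0) (h1' : 1 + x ≠ 0) (h2' : 1 - x ≠ 0) (h3' : x - 1 ≠ 0) (h4' : -1 + x ≠ 0) (h5' : -1 - x ≠ 0) (h6' : 1 - x⁻¹ ≠ 0) (h7' : 1 + x⁻¹ ≠ 0) (h8' : -1 - x⁻¹ ≠ 0) :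
    -(1 + (-x⁻¹))⁻¹ = -(1 - x⁻¹)⁻¹ := by
  rw [show (1 + (-x⁻¹) : ℝ) = 1 - x⁻¹ by ring]

lemma e08 (x : ℝ) (h0 : x ≠ 0) (h1' : 1 + x ≠ 0) (h2' : 1 - x ≠ 0) (h3' : x - 1 ≠ 0) (h4' : -1 + x ≠ 0) (h5' : -1 - x ≠ 0) (h6' : 1 - x⁻¹ ≠ 0) (h7' : 1 + x⁻¹ ≠ 0) (h8' : -1 - x⁻¹ ≠ 0) :
    (1 - (-x⁻¹))⁻¹ = -(-1 - x⁻¹)⁻¹ := by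
  rw [show (-1 - x⁻¹ : ℝ) = -(1 + x⁻¹) by ring, inv_neg, neg_neg,
    show (1 - (-x⁻¹) : ℝ) = 1 + x⁻¹ by ring]

lemma e10 (x : ℝ) (h0 : x ≠ 0) (h1' : 1 + x ≠ 0) (h2' : 1 - x ≠ 0) (h3' : x - 1 ≠ 0) (h4' : -1 + x ≠ 0) (h5' : -1 - x ≠ 0) (h6' : 1 - x⁻¹ ≠ 0) (h7' : 1 + x⁻¹ ≠ 0) (h8' : -1 - x⁻¹ ≠ 0) :
    -(-x)⁻¹ = -(-x⁻¹) := by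
  field_simp [h0, h1', h2', h3', h4', h5', h6', h7', h8'] <;> try ring

lemma e11 (x : ℝ) (h0 : x ≠ 0) (h1' : 1 + x ≠ 0) (h2' : 1 - x ≠ 0) (h3' : x - 1 ≠ 0) (h4' : -1 + x ≠ 0) (h5' : -1 - x ≠ 0) (h6' : 1 - x⁻¹ ≠ 0) (h7' : 1 + x⁻¹ ≠ 0) (h8' : -1 - x⁻¹ ≠ 0) :
    1 + (-x) = -(x - 1) := by
  field_simp [h0, h1', h2', h3', h4', h5', h6', h7', h8'] <;> try ring

lemma e12 (x : ℝ) (h0 : x ≠ 0) (h1' : 1 + x ≠ 0) (h2' : 1 - x ≠ 0) (h3' : x - 1 ≠ 0) (h4' : -1 + x ≠ 0) (h5' : -1 - x ≠ 0) (h6' : 1 - x⁻¹ ≠ 0) (h7' : 1 + x⁻¹ ≠ 0) (h8' : -1 - x⁻¹ ≠ 0) :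
    (-x) - 1 = -(1 + x) := by
  field_simp [h0, h1', h2', h3', h4', h5', h6', h7', h8'] <;> try ring

lemma e13 (x : ℝ) (h0 : x ≠ 0) (h1' : 1 + x ≠ 0) (h2' : 1 - x ≠ 0) (h3' : x - 1 ≠ 0) (h4' : -1 + x ≠ 0) (h5' : -1 - x ≠ 0) (h6' : 1 - x⁻¹ ≠ 0) (h7' : 1 + x⁻¹ ≠ 0) (h8' : -1 - x⁻¹ ≠ 0) :
    1 - (-x)⁻¹ = -(-1 - x⁻¹) := by
  field_simp [h0, h1', h2', h3', h4', h5', h6', h7', h8'] <;> try ring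

lemma e14 (x : ℝ) (h0 : x ≠ 0) (h1' : 1 + x ≠ 0) (h2' : 1 - x ≠ 0) (h3' : x - 1 ≠ 0) (h4' : -1 + x ≠ 0) (h5' : -1 - x ≠ 0) (h6' : 1 - x⁻¹ ≠ 0) (h7' : 1 + x⁻¹ ≠ 0) (h8' : -1 - x⁻¹ ≠ 0) :
    -1 - (-x)⁻¹ = -(1 - x⁻¹) := by
  field_simp [h0, h1', h2', h3', h4', h5', h6', h7', h8'] <;> try ring

lemma e15 (x : ℝ) (h0 : x ≠ 0) (h1' : 1 + x ≠ 0) (h2' : 1 - x ≠ 0) (h3' : x - 1 ≠ 0) (h4' : -1 + x ≠ 0) (h5' : -1 - x ≠ 0) (h6' : 1 - x⁻¹ ≠ 0) (h7' : 1 + x⁻¹ ≠ 0) (h8' : -1 - x⁻¹ ≠ 0) :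
    (-x) / (1 + (-x)) = -(x / (1 - x)) := by
  rw [show (1 + (-x) : ℝ) = 1 - x by ring, neg_div]

lemma e16 (x : ℝ) (h0 : x ≠ 0) (h1' : 1 + x ≠ 0) (h2' : 1 - x ≠ 0) (h3' : x - 1 ≠ 0) (h4' : -1 + x ≠ 0) (h5' : -1 - x ≠ 0) (h6' : 1 - x⁻¹ ≠ 0) (h7' : 1 + x⁻¹ ≠ 0) (h8' : -1 - x⁻¹ ≠ 0) :
    (-x) / (1 - (-x)) = -(x / (1 + x)) := by
  field_simp [h0, h1', h2', h3', h4', h5', h6', h7', h8'] <;> try ring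

lemma e17 (x : ℝ) (h0 : x ≠ 0) (h1' : 1 + x ≠ 0) (h2' : 1 - x ≠ 0) (h3' : x - 1 ≠ 0) (h4' : -1 + x ≠ 0) (h5' : -1 - x ≠ 0) (h6' : 1 - x⁻¹ ≠ 0) (h7' : 1 + x⁻¹ ≠ 0) (h8' : -1 - x⁻¹ ≠ 0) :
    -(1 + (-x))⁻¹ = -((1 - x)⁻¹) := by
  rw [show (1 + (-x) : ℝ) = 1 - x by ring]

lemma e18 (x : ℝ) (h0 : x ≠ 0) (h1' : 1 + x ≠ 0) (h2' : 1 - x ≠ 0) (h3' : x - 1 ≠ 0) (h4' : -1 + x ≠ 0) (h5' : -1 - x ≠ 0) (h6' : 1 - x⁻¹ ≠ 0) (h7' : 1 + x⁻¹ ≠ 0) (h8' : -1 - x⁻¹ ≠ 0) :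
    (1 - (-x))⁻¹ = -(-(1 + x)⁻¹) := by
  field_simp [h0, h1', h2', h3', h4', h5', h6', h7', h8'] <;> try ring

lemma mainEq (x : ℝ) (hx : Irrational x) :
    ∀ j : Fin 2, ∀ i : Fin 9,
      hMap i (gMap j x) = gMap j (hMap (![perm0, perm1] j i) x) := by
  have h0 : x ≠ 0 := by simpa using hx.ne_rat 0
  have h1 : x ≠ 1 := by simpa using hx.ne_rat 1
  have h2 : x ≠ -1 := by simpa using hx.ne_rat (-1)
  have h1' : 1 + x ≠ 0 := fun h => h2 (by linarith)
  have h2' : 1 - x ≠ 0 := fun h => h1 (by linarith)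
  have h3' : x - 1 ≠ 0 := fun h => h1 (by linarith)
  have h4' : -1 + x ≠ 0 := fun h => h1 (by linarith)
  have h5' : -1 - x ≠ 0 := fun h => h2 (by linarith)
  have hi1 : x⁻¹ ≠ 1 := fun h => h1 (by rw [← inv_inv x, h]; norm_num)
  have hi2 : x⁻¹ ≠ -1 := fun h => h2 (by rw [← inv_inv x, h]; norm_num)
  have h6' : 1 - x⁻¹ ≠ 0 := fun h => hi1 (by linarith)
  have h7' : 1 + x⁻¹ ≠ 0 := fun h => hi2 (by linarith)
  have h8' : -1 - x⁻¹ ≠ 0 := fun h => hi2 (by linarith)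
  intro j i
  fin_cases j <;> fin_cases i
  exacts [e00 x h0 h1' h2' h3' h4' h5' h6' h7' h8', e01 x h0 h1' h2' h3' h4' h5' h6' h7' h8', e02 x h0 h1' h2' h3' h4' h5' h6' h7' h8', e03 x h0 h1' h2' h3' h4' h5' h6' h7' h8', e04 x h0 h1' h2' h3' h4' h5' h6' h7' h8', e05 x h0 h1' h2' h3' h4' h5' h6' h7' h8', e06 x h0 h1' h2' h3' h4' h5' h6' h7' h8', e07 x h0 h1' h2' h3' h4' h5' h6' h7' h8', e08 x h0 h1' h2' h3' h4' h5' h6' h7' h8', e10 x h0 h1' h2' h3' h4' h5' h6' h7' h8', e11 x h0 h1' h2' h3' h4' h5' h6' h7' h8', e12 x h0 h1' h2' h3' h4' h5' h6' h7' h8', e13 x h0 h1' h2' h3' h4' h5' h6' h7' h8', e14 x h0 h1' h2' h3' h4' h5' h6' h7' h8', e15 x h0 h1' h2' h3' h4' h5' h6' h7' h8', e16 x h0 h1' h2' h3' h4' h5' h6' h7' h8', e17 x h0 h1' h2' h3' h4' h5' h6' h7' h8', e18 x h0 h1' h2' h3' h4' h5' h6' h7' h8']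

lemma unif_map_perm (σ : Equiv.Perm (Fin 9)) :
    Measure.map σ unifNine = unifNine := by
  rw [Measure.ext_iff_singleton]
  intro a
  rw [Measure.map_apply (measurable_of_countable _) (measurableSet_singleton a)]
  have h1 : σ ⁻¹' {a} = {σ.symm a} := by
    ext b; simp [Equiv.eq_symm_apply, eq_comm]
  rw [h1]
  unfold unifNine
  rw [PMF.toMeasure_apply_singleton _ _ (measurableSet_singleton _),
    PMF.toMeasure_apply_singleton _ _ (measurableSet_singleton _)]
  simp [PMF.uniformOfFintype_apply]


/-- there are permutations `σ j` of the nine maps conjugating the random walk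
step by `g j`; consequently `h_M (g j x)` and `g j (h_M x)` have the same law when `M` is
uniform on the nine matrices. -/
theorem stmt0 :
    ∃ σ : Fin 2 → Equiv.Perm (Fin 9),
      (∀ x : ℝ, Irrational x → ∀ j : Fin 2, ∀ i : Fin 9,
        hMap i (gMap j x) = gMap j (hMap (σ j i) x)) ∧
      (∀ x : ℝ, Irrational x → ∀ j : Fin 2,
        Measure.map (fun i : Fin 9 => hMap i (gMap j x)) unifNine =
          Measure.map (fun i : Fin 9 => gMap j (hMap i x)) unifNine) := by
  refine ⟨![perm0, perm1], fun x hx j i => mainEq x hx j i, ?_⟩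
  intro x hx j
  have key : (fun i : Fin 9 => hMap i (gMap j x)) =
      (fun i : Fin 9 => gMap j (hMap i x)) ∘ (![perm0, perm1] j) := by
    funext i; exact mainEq x hx j i
  rw [key, ← Measure.map_map (measurable_of_countable _) (measurable_of_countable _),
    unif_map_perm]
end

section
/- Let ν be a probability measure on ℝ that gives measure zero to the rational numbers and is invariant under the maps x ↦ -x and x ↦ -1/x (each h_i and each of these maps is defined ν-almost everywhere; extend them arbitrarily at their poles). Then the probability measure ν₁ = (1/9) Σ_{i=0}^{8} (h_i)_*ν is again invariant under x ↦ -x and x ↦ -1/x. -/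
open MeasureTheory ProbabilityTheory Filter
open scoped ENNReal

private lemma map_finsum_aux {ι : Type*} (s : Finset ι) (μ : ι → MeasureTheory.Measure ℝ)
    {f : ℝ → ℝ} (hf : Measurable f) :
    (∑ i ∈ s, μ i).map f = ∑ i ∈ s, (μ i).map f := by
  classical
  induction s using Finset.induction_on with
  | empty => simp
  | insert _ _ h ih => simp [Finset.sum_insert h, MeasureTheory.Measure.map_add _ _ hf, ih]

private lemma sum_nine_aux (f : Fin 9 → MeasureTheory.Measure ℝ) :
    ∑ i, f i = f 0 + f 1 + f 2 + f 3 + f 4 + f 5 + f 6 + f 7 + f 8 := by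
  simp [Fin.sum_univ_succ]; abel

theorem stmt1 (ν : Measure ℝ) [IsProbabilityMeasure ν]
    (hrat : ν {x : ℝ | ¬ Irrational x} = 0)
    (hneg : ν.map (fun x => -x) = ν)
    (hinv : ν.map (fun x => -x⁻¹) = ν)
    (ν₁ : Measure ℝ) (hν₁ : ν₁ = (9 : ℝ≥0∞)⁻¹ • ∑ i : Fin 9, ν.map (hMap i)) :
    ν₁.map (fun x => -x) = ν₁ ∧ ν₁.map (fun x => -x⁻¹) = ν₁ := by
  have e0 : hMap 0 = fun x : ℝ => -x⁻¹ := rfl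
  have e1 : hMap 1 = fun x : ℝ => 1 + x := rfl
  have e2 : hMap 2 = fun x : ℝ => x - 1 := rfl
  have e3 : hMap 3 = fun x : ℝ => 1 - x⁻¹ := rfl
  have e4 : hMap 4 = fun x : ℝ => -1 - x⁻¹ := rfl
  have e5 : hMap 5 = fun x : ℝ => x / (1 + x) := rfl
  have e6 : hMap 6 = fun x : ℝ => x / (1 - x) := rfl
  have e7 : hMap 7 = fun x : ℝ => -(1 + x)⁻¹ := rfl
  have e8 : hMap 8 = fun x : ℝ => (1 - x)⁻¹ := rfl
  have hIrr : ∀ᵐ x ∂ν, Irrational x := by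
    rw [MeasureTheory.ae_iff]; exact hrat
  have mneg : Measurable (fun x : ℝ => -x) := measurable_neg
  have mg : Measurable (fun x : ℝ => -x⁻¹) := measurable_inv.neg
  have mh : ∀ i : Fin 9, Measurable (hMap i) := by
    intro i
    fin_cases i <;>
      [rw [show (⟨0,by norm_num⟩ : Fin 9) = 0 from rfl, e0];
       rw [show (⟨1,by norm_num⟩ : Fin 9) = 1 from rfl, e1];
       rw [show (⟨2,by norm_num⟩ : Fin 9) = 2 from rfl, e2];
       rw [show (⟨3,by norm_num⟩ : Fin 9) = 3 from rfl, e3];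
       rw [show (⟨4,by norm_num⟩ : Fin 9) = 4 from rfl, e4];
       rw [show (⟨5,by norm_num⟩ : Fin 9) = 5 from rfl, e5];
       rw [show (⟨6,by norm_num⟩ : Fin 9) = 6 from rfl, e6];
       rw [show (⟨7,by norm_num⟩ : Fin 9) = 7 from rfl, e7];
       rw [show (⟨8,by norm_num⟩ : Fin 9) = 8 from rfl, e8]] <;>
      fun_prop
  have hnegmap : ∀ i j : Fin 9, ((fun x => -x) ∘ hMap i = hMap j ∘ (fun x : ℝ => -x)) →
      (ν.map (hMap i)).map (fun x => -x) = ν.map (hMap j) := by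
    intro i j hij
    rw [Measure.map_map mneg (mh i), hij, ← Measure.map_map (mh j) mneg, hneg]
  have hgmap : ∀ i j : Fin 9, (∀ x : ℝ, Irrational x → -(hMap i x)⁻¹ = hMap j x) →
      (ν.map (hMap i)).map (fun x => -x⁻¹) = ν.map (hMap j) := by
    intro i j hij
    rw [Measure.map_map mg (mh i)]
    refine Measure.map_congr ?_
    filter_upwards [hIrr] with x hx
    exact hij x hx
  have S0 : ν.map (hMap 0) = ν := by rw [e0, hinv]
  have N0 : (ν.map (hMap 0)).map (fun x => -x) = ν.map (hMap 0) := by rw [S0, hneg]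
  have N1 : (ν.map (hMap 1)).map (fun x => -x) = ν.map (hMap 2) := by
    refine hnegmap 1 2 ?_; funext x; simp only [e1, e2, Function.comp]; ring
  have N2 : (ν.map (hMap 2)).map (fun x => -x) = ν.map (hMap 1) := by
    refine hnegmap 2 1 ?_; funext x; simp only [e1, e2, Function.comp]; ring
  have N3 : (ν.map (hMap 3)).map (fun x => -x) = ν.map (hMap 4) := by
    refine hnegmap 3 4 ?_; funext x; simp only [e3, e4, Function.comp, inv_neg]; ring
  have N4 : (ν.map (hMap 4)).map (fun x => -x) = ν.map (hMap 3) := by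
    refine hnegmap 4 3 ?_; funext x; simp only [e3, e4, Function.comp, inv_neg]; ring
  have N5 : (ν.map (hMap 5)).map (fun x => -x) = ν.map (hMap 6) := by
    refine hnegmap 5 6 ?_; funext x; simp only [e5, e6, Function.comp, neg_div, neg_neg,
      sub_neg_eq_add]
  have N6 : (ν.map (hMap 6)).map (fun x => -x) = ν.map (hMap 5) := by
    refine hnegmap 6 5 ?_; funext x; simp only [e5, e6, Function.comp, neg_div,
      sub_neg_eq_add]; rw [sub_eq_add_neg]
  have N7 : (ν.map (hMap 7)).map (fun x => -x) = ν.map (hMap 8) := by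
    refine hnegmap 7 8 ?_; funext x; simp only [e7, e8, Function.comp, neg_neg,
      sub_neg_eq_add]
  have N8 : (ν.map (hMap 8)).map (fun x => -x) = ν.map (hMap 7) := by
    refine hnegmap 8 7 ?_; funext x; simp only [e7, e8, Function.comp];
    rw [sub_eq_add_neg]
  have G0 : (ν.map (hMap 0)).map (fun x => -x⁻¹) = ν.map (hMap 0) := by rw [S0, hinv]
  have G1 : (ν.map (hMap 1)).map (fun x => -x⁻¹) = ν.map (hMap 7) := by
    refine hgmap 1 7 ?_; intro x _; simp only [e1, e7]
  have G2 : (ν.map (hMap 2)).map (fun x => -x⁻¹) = ν.map (hMap 8) := by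
    refine hgmap 2 8 ?_; intro x _; simp only [e2, e8]; rw [← inv_neg]; ring_nf
  have G3 : (ν.map (hMap 3)).map (fun x => -x⁻¹) = ν.map (hMap 6) := by
    refine hgmap 3 6 ?_; intro x hx; simp only [e3, e6]
    have h0 : x ≠ 0 := hx.ne_zero
    have h1 : x ≠ 1 := by simpa using hx.ne_int 1
    have hx1 : x - 1 ≠ 0 := sub_ne_zero.2 h1
    have hx2 : (1 : ℝ) - x ≠ 0 := sub_ne_zero.2 (Ne.symm h1)
    rw [show (1 : ℝ) - x⁻¹ = (x - 1) / x by field_simp, inv_div]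
    field_simp
    ring
  have G4 : (ν.map (hMap 4)).map (fun x => -x⁻¹) = ν.map (hMap 5) := by
    refine hgmap 4 5 ?_; intro x hx; simp only [e4, e5]
    have h0 : x ≠ 0 := hx.ne_zero
    have h1 : x ≠ -1 := by simpa using hx.ne_int (-1)
    have hx1 : (1 : ℝ) + x ≠ 0 := by intro h; apply h1; linarith
    rw [show (-1 : ℝ) - x⁻¹ = -((1 + x) / x) by field_simp; ring, inv_neg, neg_neg, inv_div]
  have G5 : (ν.map (hMap 5)).map (fun x => -x⁻¹) = ν.map (hMap 4) := by
    refine hgmap 5 4 ?_; intro x hx; simp only [e5, e4]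
    have h0 : x ≠ 0 := hx.ne_zero
    have h1 : x ≠ -1 := by simpa using hx.ne_int (-1)
    have hx1 : (1 : ℝ) + x ≠ 0 := by intro h; apply h1; linarith
    rw [inv_div]
    field_simp
    ring
  have G6 : (ν.map (hMap 6)).map (fun x => -x⁻¹) = ν.map (hMap 3) := by
    refine hgmap 6 3 ?_; intro x hx; simp only [e6, e3]
    have h0 : x ≠ 0 := hx.ne_zero
    have h1 : x ≠ 1 := by simpa using hx.ne_int 1
    have hx1 : (1 : ℝ) - x ≠ 0 := sub_ne_zero.2 (Ne.symm h1)
    rw [inv_div]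
    field_simp
    ring
  have G7 : (ν.map (hMap 7)).map (fun x => -x⁻¹) = ν.map (hMap 1) := by
    refine hgmap 7 1 ?_; intro x _; simp only [e7, e1]; rw [inv_neg, inv_inv, neg_neg]
  have G8 : (ν.map (hMap 8)).map (fun x => -x⁻¹) = ν.map (hMap 2) := by
    refine hgmap 8 2 ?_; intro x _; simp only [e8, e2]; rw [inv_inv]; ring
  constructor
  · rw [hν₁, Measure.map_smul, map_finsum_aux _ _ mneg]
    congr 1
    rw [sum_nine_aux, sum_nine_aux (fun i => ν.map (hMap i))]
    simp only [N0, N1, N2, N3, N4, N5, N6, N7, N8]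
    abel
  · rw [hν₁, Measure.map_smul, map_finsum_aux _ _ mg]
    congr 1
    rw [sum_nine_aux, sum_nine_aux (fun i => ν.map (hMap i))]
    simp only [G0, G1, G2, G3, G4, G5, G6, G7, G8]
    abel
end

section
/- Let f be a bounded measurable real-valued function on the set of irrational real numbers satisfying f(-x) = f(x) and f(-1/x) = f(x) for every irrational x. Then the function s(x) = (1/9) Σ_{i=0}^{8} f(h_i(x)) also satisfies s(-x) = s(x) and s(-1/x) = s(x) for every irrational x. -/
open MeasureTheory ProbabilityTheory Filter
open scoped ENNReal

theorem stmt2 (f : ℝ → ℝ) (hmeas : Measurable f) (B : ℝ) (hbdd : ∀ x, |f x| ≤ B)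
    (hneg : ∀ x : ℝ, Irrational x → f (-x) = f x)
    (hinv : ∀ x : ℝ, Irrational x → f (-x⁻¹) = f x)
    (s : ℝ → ℝ) (hs : s = fun x => (1 / 9 : ℝ) * ∑ i : Fin 9, f (hMap i x)) :
    ∀ x : ℝ, Irrational x → s (-x) = s x ∧ s (-x⁻¹) = s x := by
  subst hs
  intro x hx
  have hx0 : x ≠ 0 := hx.ne_zero
  have hx1 : x ≠ 1 := hx.ne_one
  have hxm1 : x ≠ -1 := by simpa using hx.ne_int (-1)
  have h1mx : (1 : ℝ) - x ≠ 0 := by intro h; apply hx1; linarith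
  have h1px : (1 : ℝ) + x ≠ 0 := by intro h; apply hxm1; linarith
  -- irrationality facts
  have I0 : Irrational (-x⁻¹) := hx.inv.neg
  have I1 : Irrational (1 + x) := by simpa using hx.intCast_add 1
  have I2 : Irrational (x - 1) := by simpa using hx.sub_intCast 1
  have I3 : Irrational (1 - x⁻¹) := by simpa using hx.inv.intCast_sub 1
  have I4 : Irrational (-1 - x⁻¹) := by simpa using hx.inv.intCast_sub (-1)
  have e5 : x / (1 - x) = -1 + (1 - x)⁻¹ := by field_simp; ring
  have hA : (-1:ℝ) + x ≠ 0 := by intro h; apply hx1; linarith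
  have hB : (1:ℝ) + -x⁻¹ ≠ 0 := by
    intro h
    have hxi : x⁻¹ = 1 := by linarith
    exact hx1 (inv_eq_one.mp hxi)
  have hC : (1:ℝ) - -x⁻¹ ≠ 0 := by
    intro h
    have hxi : x⁻¹ = -1 := by linarith
    apply hxm1
    rw [← inv_inv x, hxi]; norm_num
  have e6 : x / (1 + x) = 1 - (1 + x)⁻¹ := by field_simp; ring
  have I7 : Irrational ((1 - x)⁻¹) := Irrational.inv (by simpa using hx.intCast_sub 1)
  have I8 : Irrational ((1 + x)⁻¹) := I1.inv
  have I5 : Irrational (x / (1 - x)) := by rw [e5]; simpa using I7.intCast_add (-1)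
  have I6 : Irrational (x / (1 + x)) := by rw [e6]; simpa using I8.intCast_sub 1
  simp only [hMap, Fin.sum_univ_succ, Matrix.cons_val_zero, Matrix.cons_val_succ,
    Finset.univ_eq_empty, Finset.sum_empty, add_zero]
  constructor
  · -- s(-x) = s(x)
    have a0 : f (-(-x)⁻¹) = f (-x⁻¹) := by
      rw [show -(-x)⁻¹ = -(-x⁻¹) by rw [inv_neg]]; exact hneg _ I0
    have a1 : f (1 + -x) = f (x - 1) := by
      rw [show (1 : ℝ) + -x = -(x - 1) by ring]; exact hneg _ I2
    have a2 : f (-x - 1) = f (1 + x) := by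
      rw [show -x - 1 = -(1 + x) by ring]; exact hneg _ I1
    have a3 : f (1 - (-x)⁻¹) = f (-1 - x⁻¹) := by
      rw [show (1:ℝ) - (-x)⁻¹ = -(-1 - x⁻¹) by rw [inv_neg]; ring]; exact hneg _ I4
    have a4 : f (-1 - (-x)⁻¹) = f (1 - x⁻¹) := by
      rw [show (-1:ℝ) - (-x)⁻¹ = -(1 - x⁻¹) by rw [inv_neg]; ring]; exact hneg _ I3
    have a5 : f (-x / (1 + -x)) = f (x / (1 - x)) := by
      rw [show -x / (1 + -x) = -(x / (1 - x)) by rw [neg_div]; ring_nf]; exact hneg _ I5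
    have a6 : f (-x / (1 - -x)) = f (x / (1 + x)) := by
      rw [show -x / (1 - -x) = -(x / (1 + x)) by rw [neg_div]; ring_nf]; exact hneg _ I6
    have a7 : f (-(1 + -x)⁻¹) = f ((1 - x)⁻¹) := by
      rw [show -(1 + -x)⁻¹ = -((1 - x)⁻¹) by ring_nf]; exact hneg _ I7
    have a8 : f ((1 - -x)⁻¹) = f (-(1 + x)⁻¹) := by
      rw [show ((1:ℝ) - -x)⁻¹ = -(-(1 + x)⁻¹) by ring_nf]; exact hneg _ I8.neg
    rw [a0, a1, a2, a3, a4, a5, a6, a7, a8]; ring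
  · -- s(-x⁻¹) = s(x)
    have b0 : f (-(-x⁻¹)⁻¹) = f (-x⁻¹) := by
      rw [show -(-x⁻¹)⁻¹ = x by rw [inv_neg, inv_inv, neg_neg]]
      exact (hinv x hx).symm
    have b1 : f (1 + -x⁻¹) = f (1 - x⁻¹) := by congr 1
    have b2 : f (-x⁻¹ - 1) = f (-1 - x⁻¹) := by congr 1; ring
    have b3 : f (1 - (-x⁻¹)⁻¹) = f (1 + x) := by
      congr 1; rw [inv_neg, inv_inv]; ring
    have b4 : f (-1 - (-x⁻¹)⁻¹) = f (x - 1) := by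
      congr 1; rw [inv_neg, inv_inv]; ring
    have b5 : f (-x⁻¹ / (1 + -x⁻¹)) = f ((1 - x)⁻¹) := by
      congr 1; field_simp [hA, h1px]
      linear_combination mul_inv_cancel₀ hA
    have b6 : f (-x⁻¹ / (1 - -x⁻¹)) = f (-(1 + x)⁻¹) := by
      congr 1; field_simp [hA, h1px]
      ring
    have b7 : f (-(1 + -x⁻¹)⁻¹) = f (x / (1 - x)) := by
      congr 1; rw [eq_div_iff h1mx]; field_simp [hB, hx0]
      linear_combination mul_inv_cancel₀ hA
    have b8 : f ((1 - -x⁻¹)⁻¹) = f (x / (1 + x)) := by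
      congr 1; rw [eq_div_iff h1px]; field_simp [hC, hx0]
      ring
    rw [b0, b1, b2, b3, b4, b5, b6, b7, b8]; ring
end

section
/- Let X be a random variable taking values in the irrational real numbers, and let ν be the law of W = C(X) on [0,1]. Then the law of X is invariant under the maps x ↦ -x and x ↦ -1/x if and only if the law of X equals the mixture ∫ μ_w dν(w), where μ_w = (1/4)(δ_w + δ_{-w} + δ_{1/w} + δ_{-1/w}); in that case X has the same distribution as S₂·W'^{S₁}, where W' ~ ν and S₁, S₂ are random signs with P(S_i = 1) = P(S_i = -1) = 1/2, with W', S₁, S₂ independent. -/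
open MeasureTheory ProbabilityTheory Filter
open scoped ENNReal

private lemma measurable_Cfun : Measurable Cfun :=
  (measurable_id.abs).min (measurable_id.abs).inv

private lemma Cfun_pos {x : ℝ} (h0 : 0 < x) (h1 : x < 1) : Cfun x = x := by
  unfold Cfun
  rw [abs_of_pos h0]
  refine min_eq_left ?_
  nlinarith [mul_inv_cancel₀ (ne_of_gt h0), inv_pos.mpr h0]

private lemma Cfun_neg_eq {x : ℝ} : Cfun (-x) = Cfun x := by
  unfold Cfun; rw [abs_neg]

private lemma Cfun_inv_eq {x : ℝ} : Cfun x⁻¹ = Cfun x := by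
  unfold Cfun; rw [abs_inv, inv_inv, min_comm]

private lemma Cfun_gt {x : ℝ} (h : 1 < x) : Cfun x = x⁻¹ := by
  have h0 : 0 < x := by linarith
  have : Cfun x = Cfun x⁻¹ := Cfun_inv_eq.symm
  rw [this, Cfun_pos (inv_pos.mpr h0) (by nlinarith [mul_inv_cancel₀ (ne_of_gt h0), inv_pos.mpr h0])]

private lemma Cfun_negIoo {x : ℝ} (h0 : -1 < x) (h1 : x < 0) : Cfun x = -x := by
  rw [← Cfun_neg_eq, Cfun_pos (by linarith) (by linarith)]

private lemma Cfun_lt {x : ℝ} (h : x < -1) : Cfun x = -x⁻¹ := by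
  rw [← Cfun_neg_eq, Cfun_gt (by linarith), inv_neg]


private lemma measurable_ninv : Measurable (fun x : ℝ => -x⁻¹) := measurable_inv.neg

-- measurability of the mixture kernel
private lemma measurable_mix : Measurable (fun w : ℝ => (4 : ℝ≥0∞)⁻¹ •
    (Measure.dirac w + Measure.dirac (-w) + Measure.dirac w⁻¹ + Measure.dirac (-w⁻¹))) := by
  apply Measure.measurable_of_measurable_coe
  intro A hA
  simp only [Measure.smul_apply, Measure.coe_add, Pi.add_apply, Measure.dirac_apply' _ hA,
    smul_eq_mul]
  apply Measurable.const_mul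
  exact (((measurable_one.indicator hA).add
      ((measurable_one.indicator hA).comp measurable_neg)).add
      ((measurable_one.indicator hA).comp measurable_inv)).add
      ((measurable_one.indicator hA).comp measurable_ninv)

private lemma indicator_comp {A : Set ℝ} (g : ℝ → ℝ) :
    (fun w => A.indicator (1 : ℝ → ℝ≥0∞) (g w)) = (g ⁻¹' A).indicator 1 := by
  funext w
  by_cases h : g w ∈ A <;> simp [Set.indicator_apply, h]

private lemma lint_ind {ν : Measure ℝ} {A : Set ℝ} (hA : MeasurableSet A)
    {g : ℝ → ℝ} (hg : Measurable g) :
    ∫⁻ w, A.indicator (1 : ℝ → ℝ≥0∞) (g w) ∂ν = ν.map g A := by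
  rw [Measure.map_apply hg hA, indicator_comp g, lintegral_indicator_one (hg hA)]

private lemma bind_mix (ν : Measure ℝ) :
    (ν.bind (fun w => (4 : ℝ≥0∞)⁻¹ •
      (Measure.dirac w + Measure.dirac (-w) + Measure.dirac w⁻¹ + Measure.dirac (-w⁻¹))))
    = (4 : ℝ≥0∞)⁻¹ • (ν + ν.map (fun x : ℝ => -x) + ν.map (fun x : ℝ => x⁻¹) +
        ν.map (fun x : ℝ => -x⁻¹)) := by
  ext A hA
  rw [Measure.bind_apply hA measurable_mix.aemeasurable]
  simp only [Measure.smul_apply, Measure.coe_add, Pi.add_apply, Measure.dirac_apply' _ hA,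
    smul_eq_mul]
  rw [lintegral_const_mul' _ _ (by norm_num)]
  congr 1
  have m1 : Measurable (fun w : ℝ => A.indicator (1 : ℝ → ℝ≥0∞) w) := measurable_one.indicator hA
  have m2 : Measurable (fun w : ℝ => A.indicator (1 : ℝ → ℝ≥0∞) (-w)) :=
    (measurable_one.indicator hA).comp measurable_neg
  have m3 : Measurable (fun w : ℝ => A.indicator (1 : ℝ → ℝ≥0∞) w⁻¹) :=
    (measurable_one.indicator hA).comp measurable_inv
  have m4 : Measurable (fun w : ℝ => A.indicator (1 : ℝ → ℝ≥0∞) (-w⁻¹)) :=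
    (measurable_one.indicator hA).comp measurable_ninv
  rw [lintegral_add_right _ m4, lintegral_add_right _ m3, lintegral_add_right _ m2]
  rw [lintegral_indicator_one hA,
    lint_ind hA measurable_neg, lint_ind hA measurable_inv, lint_ind hA measurable_ninv]


private lemma decomp (μ : Measure ℝ) (h0 : μ ({-1, 0, 1} : Set ℝ) = 0)
    {A : Set ℝ} (hA : MeasurableSet A) :
    μ A = μ (A ∩ Set.Ioo 0 1) + μ (A ∩ Set.Ioi 1) + μ (A ∩ Set.Ioo (-1) 0) +
      μ (A ∩ Set.Iio (-1)) := by
  set S : Set ℝ := Set.Ioo 0 1 ∪ Set.Ioi 1 ∪ Set.Ioo (-1) 0 ∪ Set.Iio (-1) with hS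
  have hSm : MeasurableSet S :=
    ((measurableSet_Ioo.union measurableSet_Ioi).union measurableSet_Ioo).union measurableSet_Iio
  have hcompl : Sᶜ ⊆ ({-1, 0, 1} : Set ℝ) := by
    intro x hx
    simp only [hS, Set.mem_compl_iff, Set.mem_union, Set.mem_Ioo, Set.mem_Ioi, Set.mem_Iio,
      not_or, not_and, not_lt] at hx
    obtain ⟨⟨⟨h1, h2⟩, h3⟩, h4⟩ := hx
    simp only [Set.mem_insert_iff, Set.mem_singleton_iff]
    rcases lt_trichotomy x 0 with h | h | h
    · left
      rcases lt_trichotomy x (-1) with h' | h' | h'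
      · exact absurd h' (not_lt.mpr h4)
      · exact h'
      · exact absurd h (not_lt.mpr (h3 h'))
    · right; left; exact h
    · right; right
      have := h1 h
      rcases lt_trichotomy x 1 with h' | h' | h'
      · linarith
      · exact h'
      · exact absurd h' (not_lt.mpr h2)
  have key : μ A = μ (A ∩ S) := by
    have h1 : μ (A ∩ S) + μ (A \ S) = μ A := measure_inter_add_diff A hSm
    have h2 : μ (A \ S) = 0 :=
      measure_mono_null (fun x hx => hcompl hx.2) h0
    rw [← h1, h2, add_zero]
  rw [key, hS, Set.inter_union_distrib_left, Set.inter_union_distrib_left,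
    Set.inter_union_distrib_left]
  have d12 : Disjoint (Set.Ioo (0:ℝ) 1) (Set.Ioi 1) := by
    rw [Set.disjoint_left]; rintro x ⟨_, h⟩ h'; exact absurd h' (not_lt.mpr h.le)
  have d13 : Disjoint (Set.Ioo (0:ℝ) 1) (Set.Ioo (-1) 0) := by
    rw [Set.disjoint_left]; rintro x ⟨h, _⟩ ⟨_, h'⟩; linarith
  have d23 : Disjoint (Set.Ioi (1:ℝ)) (Set.Ioo (-1) 0) := by
    rw [Set.disjoint_left]; rintro x h ⟨_, h'⟩; simp only [Set.mem_Ioi] at h; linarith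
  have d14 : Disjoint (Set.Ioo (0:ℝ) 1) (Set.Iio (-1)) := by
    rw [Set.disjoint_left]; rintro x ⟨h, _⟩ h'; simp only [Set.mem_Iio] at h'; linarith
  have d24 : Disjoint (Set.Ioi (1:ℝ)) (Set.Iio (-1)) := by
    rw [Set.disjoint_left]; rintro x h h'
    simp only [Set.mem_Ioi] at h; simp only [Set.mem_Iio] at h'; linarith
  have d34 : Disjoint (Set.Ioo (-1:ℝ) 0) (Set.Iio (-1)) := by
    rw [Set.disjoint_left]; rintro x ⟨h, _⟩ h'; simp only [Set.mem_Iio] at h'; linarith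
  rw [measure_union ?_ (hA.inter measurableSet_Iio),
    measure_union ?_ (hA.inter measurableSet_Ioo),
    measure_union ?_ (hA.inter measurableSet_Ioi)]
  · exact d12.mono Set.inter_subset_right Set.inter_subset_right
  · exact Disjoint.union_left (d13.mono Set.inter_subset_right Set.inter_subset_right)
      (d23.mono Set.inter_subset_right Set.inter_subset_right)
  · exact Disjoint.union_left
      (Disjoint.union_left (d14.mono Set.inter_subset_right Set.inter_subset_right)
        (d24.mono Set.inter_subset_right Set.inter_subset_right))
      (d34.mono Set.inter_subset_right Set.inter_subset_right)


-- basic interval equivalences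
private lemma mem_inv_Ioo {x : ℝ} : x⁻¹ ∈ Set.Ioo (0:ℝ) 1 ↔ x ∈ Set.Ioi (1:ℝ) := by
  simp only [Set.mem_Ioo, Set.mem_Ioi]
  constructor
  · rintro ⟨h1, h2⟩
    have hx : 0 < x := inv_pos.mp h1
    nlinarith [mul_inv_cancel₀ (ne_of_gt hx)]
  · intro h
    have hx : 0 < x := by linarith
    constructor
    · exact inv_pos.mpr hx
    · nlinarith [mul_inv_cancel₀ (ne_of_gt hx), inv_pos.mpr hx]

private lemma mem_neg_Ioo {x : ℝ} : -x ∈ Set.Ioo (0:ℝ) 1 ↔ x ∈ Set.Ioo (-1:ℝ) 0 := by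
  simp only [Set.mem_Ioo]; constructor <;> rintro ⟨h1, h2⟩ <;> constructor <;> linarith

private lemma mem_ninv_Ioo {x : ℝ} : -x⁻¹ ∈ Set.Ioo (0:ℝ) 1 ↔ x ∈ Set.Iio (-1:ℝ) := by
  simp only [Set.mem_Ioo, Set.mem_Iio]
  constructor
  · rintro ⟨h1, h2⟩
    have hx : x⁻¹ < 0 := by linarith
    have hx0 : x < 0 := inv_neg''.mp hx
    nlinarith [mul_inv_cancel₀ (ne_of_lt hx0)]
  · intro h
    have hx0 : x < 0 := by linarith
    have h1 : x⁻¹ < 0 := inv_neg''.mpr hx0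
    constructor
    · linarith
    · nlinarith [mul_inv_cancel₀ (ne_of_lt hx0)]

private lemma map_Cfun_apply (μ : Measure ℝ) (h0 : μ ({-1, 0, 1} : Set ℝ) = 0)
    (hneg : μ.map (fun x : ℝ => -x) = μ) (hinv : μ.map (fun x : ℝ => x⁻¹) = μ)
    (hninv : μ.map (fun x : ℝ => -x⁻¹) = μ)
    {A : Set ℝ} (hA : MeasurableSet A) :
    μ.map Cfun A = 4 * μ (A ∩ Set.Ioo 0 1) := by
  rw [Measure.map_apply measurable_Cfun hA, decomp μ h0 (measurable_Cfun hA)]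
  have e1 : Cfun ⁻¹' A ∩ Set.Ioo 0 1 = A ∩ Set.Ioo 0 1 := by
    ext x
    simp only [Set.mem_inter_iff, Set.mem_preimage, Set.mem_Ioo]
    refine and_congr_left fun hx => ?_
    rw [Cfun_pos hx.1 hx.2]
  have e2 : Cfun ⁻¹' A ∩ Set.Ioi 1 = (fun x : ℝ => x⁻¹) ⁻¹' (A ∩ Set.Ioo 0 1) := by
    ext x
    simp only [Set.mem_inter_iff, Set.mem_preimage]
    constructor
    · rintro ⟨hCA, hx⟩
      refine ⟨?_, mem_inv_Ioo.mpr hx⟩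
      rwa [Cfun_gt hx] at hCA
    · rintro ⟨hxa, hxi⟩
      have hx := mem_inv_Ioo.mp hxi
      exact ⟨by rwa [Cfun_gt hx], hx⟩
  have e3 : Cfun ⁻¹' A ∩ Set.Ioo (-1) 0 = (fun x : ℝ => -x) ⁻¹' (A ∩ Set.Ioo 0 1) := by
    ext x
    simp only [Set.mem_inter_iff, Set.mem_preimage]
    constructor
    · rintro ⟨hCA, hx⟩
      refine ⟨?_, mem_neg_Ioo.mpr hx⟩
      rwa [Cfun_negIoo hx.1 hx.2] at hCA
    · rintro ⟨hxa, hxi⟩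
      have hx := mem_neg_Ioo.mp hxi
      exact ⟨by rwa [Cfun_negIoo hx.1 hx.2], hx⟩
  have e4 : Cfun ⁻¹' A ∩ Set.Iio (-1) = (fun x : ℝ => -x⁻¹) ⁻¹' (A ∩ Set.Ioo 0 1) := by
    ext x
    simp only [Set.mem_inter_iff, Set.mem_preimage]
    constructor
    · rintro ⟨hCA, hx⟩
      refine ⟨?_, mem_ninv_Ioo.mpr hx⟩
      rwa [Cfun_lt hx] at hCA
    · rintro ⟨hxa, hxi⟩
      have hx := mem_ninv_Ioo.mp hxi
      exact ⟨by rwa [Cfun_lt hx], hx⟩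
  rw [e1, e2, e3, e4]
  have hAI : MeasurableSet (A ∩ Set.Ioo 0 1) := hA.inter measurableSet_Ioo
  rw [← Measure.map_apply measurable_inv hAI, hinv,
    ← Measure.map_apply measurable_neg hAI, hneg,
    ← Measure.map_apply measurable_ninv hAI, hninv]
  ring


private lemma inv_invariant {μ : Measure ℝ}
    (hneg : μ.map (fun x : ℝ => -x) = μ) (hninv : μ.map (fun x : ℝ => -x⁻¹) = μ) :
    μ.map (fun x : ℝ => x⁻¹) = μ := by
  have h : (fun x : ℝ => x⁻¹) = (fun x : ℝ => -x) ∘ (fun x : ℝ => -x⁻¹) := by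
    funext x; simp
  rw [h, ← Measure.map_map measurable_neg measurable_ninv, hninv, hneg]

private lemma forward_eq (μ : Measure ℝ) (h0 : μ ({-1, 0, 1} : Set ℝ) = 0)
    (hneg : μ.map (fun x : ℝ => -x) = μ) (hninv : μ.map (fun x : ℝ => -x⁻¹) = μ) :
    μ = (4 : ℝ≥0∞)⁻¹ • (μ.map Cfun + (μ.map Cfun).map (fun x : ℝ => -x) +
      (μ.map Cfun).map (fun x : ℝ => x⁻¹) + (μ.map Cfun).map (fun x : ℝ => -x⁻¹)) := by
  have hinv : μ.map (fun x : ℝ => x⁻¹) = μ := inv_invariant hneg hninv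
  ext A hA
  simp only [Measure.smul_apply, Measure.coe_add, Pi.add_apply, smul_eq_mul]
  rw [Measure.map_apply measurable_neg hA, Measure.map_apply measurable_inv hA,
    Measure.map_apply measurable_ninv hA]
  rw [map_Cfun_apply μ h0 hneg hinv hninv hA,
    map_Cfun_apply μ h0 hneg hinv hninv (measurable_neg hA),
    map_Cfun_apply μ h0 hneg hinv hninv (measurable_inv hA),
    map_Cfun_apply μ h0 hneg hinv hninv (measurable_ninv hA)]
  have e2 : (fun x : ℝ => x⁻¹) ⁻¹' A ∩ Set.Ioo 0 1 = (fun x : ℝ => x⁻¹) ⁻¹' (A ∩ Set.Ioi 1) := by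
    ext x
    simp only [Set.mem_inter_iff, Set.mem_preimage]
    exact and_congr_right fun _ => by
      rw [← mem_inv_Ioo (x := x⁻¹), inv_inv]
  have e3 : (fun x : ℝ => -x) ⁻¹' A ∩ Set.Ioo 0 1 =
      (fun x : ℝ => -x) ⁻¹' (A ∩ Set.Ioo (-1) 0) := by
    ext x
    simp only [Set.mem_inter_iff, Set.mem_preimage]
    exact and_congr_right fun _ => by
      rw [← mem_neg_Ioo (x := -x), neg_neg]
  have e4 : (fun x : ℝ => -x⁻¹) ⁻¹' A ∩ Set.Ioo 0 1 =
      (fun x : ℝ => -x⁻¹) ⁻¹' (A ∩ Set.Iio (-1)) := by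
    ext x
    simp only [Set.mem_inter_iff, Set.mem_preimage]
    exact and_congr_right fun _ => by
      rw [← mem_ninv_Ioo (x := -x⁻¹), inv_neg, neg_neg, inv_inv]
  rw [e2, e3, e4]
  rw [← Measure.map_apply measurable_inv (hA.inter measurableSet_Ioi), hinv,
    ← Measure.map_apply measurable_neg (hA.inter measurableSet_Ioo), hneg,
    ← Measure.map_apply measurable_ninv (hA.inter measurableSet_Iio), hninv]
  rw [decomp μ h0 hA]
  have h4 : (4 : ℝ≥0∞)⁻¹ * 4 = 1 := ENNReal.inv_mul_cancel (by norm_num) (by norm_num)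
  calc μ (A ∩ Set.Ioo 0 1) + μ (A ∩ Set.Ioi 1) + μ (A ∩ Set.Ioo (-1) 0) + μ (A ∩ Set.Iio (-1))
      = 1 * (μ (A ∩ Set.Ioo 0 1) + μ (A ∩ Set.Ioi 1) + μ (A ∩ Set.Ioo (-1) 0)
          + μ (A ∩ Set.Iio (-1))) := (one_mul _).symm
    _ = (4 : ℝ≥0∞)⁻¹ * (4 * μ (A ∩ Set.Ioo 0 1) + 4 * μ (A ∩ Set.Ioo (-1) 0)
          + 4 * μ (A ∩ Set.Ioi 1) + 4 * μ (A ∩ Set.Iio (-1))) := by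
        rw [← h4]; ring

private lemma map_neg_mix (ν : Measure ℝ) :
    ((4 : ℝ≥0∞)⁻¹ • (ν + ν.map (fun x : ℝ => -x) + ν.map (fun x : ℝ => x⁻¹) +
        ν.map (fun x : ℝ => -x⁻¹))).map (fun x : ℝ => -x)
    = (4 : ℝ≥0∞)⁻¹ • (ν + ν.map (fun x : ℝ => -x) + ν.map (fun x : ℝ => x⁻¹) +
        ν.map (fun x : ℝ => -x⁻¹)) := by
  rw [Measure.map_smul, Measure.map_add _ _ measurable_neg, Measure.map_add _ _ measurable_neg,
    Measure.map_add _ _ measurable_neg,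
    Measure.map_map measurable_neg measurable_neg,
    Measure.map_map measurable_neg measurable_inv,
    Measure.map_map measurable_neg measurable_ninv]
  have e1 : (fun x : ℝ => -x) ∘ (fun x : ℝ => -x) = id := by funext x; simp
  have e2 : (fun x : ℝ => -x) ∘ (fun x : ℝ => x⁻¹) = (fun x : ℝ => -x⁻¹) := rfl
  have e3 : (fun x : ℝ => -x) ∘ (fun x : ℝ => -x⁻¹) = (fun x : ℝ => x⁻¹) := by funext x; simp
  rw [e1, e2, e3, Measure.map_id]
  congr 1
  abel

private lemma map_ninv_mix (ν : Measure ℝ) :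
    ((4 : ℝ≥0∞)⁻¹ • (ν + ν.map (fun x : ℝ => -x) + ν.map (fun x : ℝ => x⁻¹) +
        ν.map (fun x : ℝ => -x⁻¹))).map (fun x : ℝ => -x⁻¹)
    = (4 : ℝ≥0∞)⁻¹ • (ν + ν.map (fun x : ℝ => -x) + ν.map (fun x : ℝ => x⁻¹) +
        ν.map (fun x : ℝ => -x⁻¹)) := by
  rw [Measure.map_smul, Measure.map_add _ _ measurable_ninv,
    Measure.map_add _ _ measurable_ninv, Measure.map_add _ _ measurable_ninv,
    Measure.map_map measurable_ninv measurable_neg,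
    Measure.map_map measurable_ninv measurable_inv,
    Measure.map_map measurable_ninv measurable_ninv]
  have e1 : (fun x : ℝ => -x⁻¹) ∘ (fun x : ℝ => -x) = (fun x : ℝ => x⁻¹) := by
    funext x; simp [inv_neg]
  have e2 : (fun x : ℝ => -x⁻¹) ∘ (fun x : ℝ => x⁻¹) = (fun x : ℝ => -x) := by funext x; simp
  have e3 : (fun x : ℝ => -x⁻¹) ∘ (fun x : ℝ => -x⁻¹) = id := by
    funext x; simp [inv_neg]
  rw [e1, e2, e3, Measure.map_id]
  congr 1
  abel


private lemma prod_smul_right' {α β : Type*} [MeasurableSpace α] [MeasurableSpace β]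
    (μ : Measure α) (ν : Measure β) [SFinite ν] (c : ℝ≥0∞) :
    μ.prod (c • ν) = c • μ.prod ν := by
  ext s hs
  rw [Measure.prod_apply hs, Measure.smul_apply, Measure.prod_apply hs, smul_eq_mul,
    ← lintegral_const_mul _ (measurable_measure_prodMk_left hs)]
  simp [Measure.smul_apply, smul_eq_mul]

private lemma prod_smul_left' {α β : Type*} [MeasurableSpace α] [MeasurableSpace β]
    (μ : Measure α) (ν : Measure β) [SFinite ν] (c : ℝ≥0∞) :
    (c • μ).prod ν = c • μ.prod ν := by
  ext s hs
  rw [Measure.prod_apply hs, Measure.smul_apply, Measure.prod_apply hs,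
    lintegral_smul_measure, smul_eq_mul]

private lemma bern_prod_bern : bern.prod bern =
    (4 : ℝ≥0∞)⁻¹ • (Measure.dirac ((1:ℝ), (1:ℝ)) + Measure.dirac ((1:ℝ), (-1:ℝ)) +
      Measure.dirac ((-1:ℝ), (1:ℝ)) + Measure.dirac ((-1:ℝ), (-1:ℝ))) := by
  have hb : bern = (2 : ℝ≥0∞)⁻¹ • (Measure.dirac (1:ℝ) + Measure.dirac (-1:ℝ)) := rfl
  rw [hb, prod_smul_left', prod_smul_right', smul_smul,
    Measure.prod_add, Measure.add_prod, Measure.add_prod,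
    Measure.dirac_prod_dirac, Measure.dirac_prod_dirac, Measure.dirac_prod_dirac,
    Measure.dirac_prod_dirac]
  have h2 : (2 : ℝ≥0∞)⁻¹ * 2⁻¹ = 4⁻¹ := by
    rw [← ENNReal.mul_inv (by norm_num) (by norm_num)]; norm_num
  rw [h2]
  congr 1
  abel

private lemma prod_bern (ν : Measure ℝ) [SFinite ν] :
    ν.prod (bern.prod bern) = (4 : ℝ≥0∞)⁻¹ •
      (ν.map (fun w : ℝ => (w, ((1:ℝ), (1:ℝ)))) + ν.map (fun w : ℝ => (w, ((1:ℝ), (-1:ℝ)))) +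
       ν.map (fun w : ℝ => (w, ((-1:ℝ), (1:ℝ)))) + ν.map (fun w : ℝ => (w, ((-1:ℝ), (-1:ℝ))))) := by
  rw [bern_prod_bern, prod_smul_right', Measure.prod_add, Measure.prod_add, Measure.prod_add,
    Measure.prod_dirac, Measure.prod_dirac, Measure.prod_dirac, Measure.prod_dirac]

private noncomputable def psiFn (p : ℝ × ℝ × ℝ) : ℝ :=
  p.2.2 * (if p.2.1 < 0 then p.1⁻¹ else p.1)

private lemma measurable_psiFn : Measurable psiFn := by
  apply Measurable.mul measurable_snd.snd
  exact Measurable.ite (measurableSet_lt (measurable_snd.fst) measurable_const)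
    measurable_fst.inv measurable_fst

private lemma map_prod_bern (ν : Measure ℝ) [SFinite ν] :
    (ν.prod (bern.prod bern)).map (fun p : ℝ × ℝ × ℝ => p.2.2 * p.1 ^ p.2.1)
    = (4 : ℝ≥0∞)⁻¹ • (ν + ν.map (fun x : ℝ => -x) + ν.map (fun x : ℝ => x⁻¹) +
        ν.map (fun x : ℝ => -x⁻¹)) := by
  have hG : MeasurableSet {p : ℝ × ℝ × ℝ | p.2.1 = 1 ∨ p.2.1 = -1} := by
    apply MeasurableSet.union
    · exact measurable_snd.fst (measurableSet_singleton (1:ℝ))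
    · exact measurable_snd.fst (measurableSet_singleton (-1:ℝ))
  have hae : (fun p : ℝ × ℝ × ℝ => p.2.2 * p.1 ^ p.2.1) =ᵐ[ν.prod (bern.prod bern)] psiFn := by
    have hmem : {p : ℝ × ℝ × ℝ | p.2.1 = 1 ∨ p.2.1 = -1} ∈ ae (ν.prod (bern.prod bern)) := by
      rw [mem_ae_iff, prod_bern]
      simp only [Measure.smul_apply, Measure.coe_add, Pi.add_apply, smul_eq_mul]
      have key : ∀ (a b : ℝ), (a = 1 ∨ a = -1) →
          ν.map (fun w : ℝ => (w, (a, b))) {p : ℝ × ℝ × ℝ | p.2.1 = 1 ∨ p.2.1 = -1}ᶜ = 0 := by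
        intro a b hab
        rw [Measure.map_apply (measurable_prodMk_right) hG.compl]
        have : (fun w : ℝ => (w, (a, b))) ⁻¹' {p : ℝ × ℝ × ℝ | p.2.1 = 1 ∨ p.2.1 = -1}ᶜ = ∅ := by
          ext w
          simp [hab]
        rw [this]
        exact measure_empty
      rw [key 1 1 (Or.inl rfl), key 1 (-1) (Or.inl rfl), key (-1) 1 (Or.inr rfl),
        key (-1) (-1) (Or.inr rfl)]
      simp
    filter_upwards [hmem] with p hp
    rcases hp with hp | hp
    · simp only [psiFn, hp, Real.rpow_one]
      norm_num
    · simp only [psiFn, hp, Real.rpow_neg_one]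
      norm_num
  rw [Measure.map_congr hae, prod_bern, Measure.map_smul,
    Measure.map_add _ _ measurable_psiFn, Measure.map_add _ _ measurable_psiFn,
    Measure.map_add _ _ measurable_psiFn,
    Measure.map_map measurable_psiFn (measurable_prodMk_right),
    Measure.map_map measurable_psiFn (measurable_prodMk_right),
    Measure.map_map measurable_psiFn (measurable_prodMk_right),
    Measure.map_map measurable_psiFn (measurable_prodMk_right)]
  have c1 : psiFn ∘ (fun w : ℝ => (w, ((1:ℝ), (1:ℝ)))) = id := by
    funext w; simp [psiFn]
  have c2 : psiFn ∘ (fun w : ℝ => (w, ((1:ℝ), (-1:ℝ)))) = (fun x : ℝ => -x) := by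
    funext w; simp [psiFn]
  have c3 : psiFn ∘ (fun w : ℝ => (w, ((-1:ℝ), (1:ℝ)))) = (fun x : ℝ => x⁻¹) := by
    funext w; simp [psiFn]
  have c4 : psiFn ∘ (fun w : ℝ => (w, ((-1:ℝ), (-1:ℝ)))) = (fun x : ℝ => -x⁻¹) := by
    funext w; simp [psiFn]
  rw [c1, c2, c3, c4, Measure.map_id]

theorem stmt3 {Ω : Type*} [MeasurableSpace Ω] (P : Measure Ω) [IsProbabilityMeasure P]
    (X : Ω → ℝ) (hX : Measurable X) (hirr : ∀ᵐ ω ∂P, Irrational (X ω))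
    (ν : Measure ℝ) (hν : ν = P.map (fun ω => Cfun (X ω))) :
    (((P.map X).map (fun x => -x) = P.map X ∧ (P.map X).map (fun x => -x⁻¹) = P.map X) ↔
      P.map X = ν.bind (fun w => (4 : ℝ≥0∞)⁻¹ •
        (Measure.dirac w + Measure.dirac (-w) + Measure.dirac w⁻¹ + Measure.dirac (-w⁻¹)))) ∧
    (((P.map X).map (fun x => -x) = P.map X ∧ (P.map X).map (fun x => -x⁻¹) = P.map X) →
      P.map X = (ν.prod (bern.prod bern)).map
        (fun p : ℝ × ℝ × ℝ => p.2.2 * p.1 ^ p.2.1)) := by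
  have hμν : ν = (P.map X).map Cfun := by
    rw [hν, Measure.map_map measurable_Cfun hX]
    rfl
  have h0 : (P.map X) ({-1, 0, 1} : Set ℝ) = 0 := by
    have hIrrSet : MeasurableSet {x : ℝ | Irrational x} := by
      have : {x : ℝ | Irrational x} = (Set.range ((↑) : ℚ → ℝ))ᶜ := rfl
      rw [this]
      exact (Set.countable_range _).measurableSet.compl
    have h1 : ∀ᵐ x ∂(P.map X), Irrational x := (ae_map_iff hX.aemeasurable hIrrSet).mpr hirr
    have h2 : (P.map X) {x : ℝ | ¬ Irrational x} = 0 := ae_iff.mp h1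
    refine measure_mono_null ?_ h2
    intro x hx
    simp only [Set.mem_insert_iff, Set.mem_singleton_iff] at hx
    rcases hx with rfl | rfl | rfl
    · exact fun h => h ⟨-1, by norm_num⟩
    · exact fun h => h ⟨0, by norm_num⟩
    · exact fun h => h ⟨1, by norm_num⟩
  constructor
  · constructor
    · rintro ⟨hneg, hninv⟩
      rw [hμν, bind_mix]
      exact forward_eq _ h0 hneg hninv
    · intro h
      rw [bind_mix] at h
      constructor
      · rw [h]; exact map_neg_mix ν
      · rw [h]; exact map_ninv_mix ν
  · rintro ⟨hneg, hninv⟩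
    haveI hpν : IsProbabilityMeasure ν := by
      rw [hν]
      exact Measure.isProbabilityMeasure_map ((measurable_Cfun.comp hX).aemeasurable)
    rw [map_prod_bern ν, hμν]
    exact forward_eq _ h0 hneg hninv
end

section
/- Let ν be a probability measure on [0,1] giving measure zero to the rationals and satisfying (1/9)(H₀)_*ν + (2/9) Σ_{i=1}^{4} (H_i)_*ν = ν. Let λ be the law of S₂·W^{S₁}, where W ~ ν and S₁, S₂ are independent random signs (P(S_i=±1)=1/2) independent of W. Then λ is stationary for the random walk: (1/9) Σ_{i=0}^{8} (h_i)_*λ = λ. -/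
open MeasureTheory ProbabilityTheory Filter
open scoped ENNReal

private lemma smulFinite {β : Type} [MeasurableSpace β] (c : ℝ≥0∞) (hc : c ≠ ⊤)
    (ρ : Measure β) [IsFiniteMeasure ρ] : IsFiniteMeasure (c • ρ) :=
  ⟨by simp only [Measure.smul_apply, smul_eq_mul]
      exact ENNReal.mul_lt_top hc.lt_top (measure_lt_top ρ _)⟩

private lemma prodSmulRight (μ : Measure ℝ) [SigmaFinite μ] (c : ℝ≥0∞) (hc : c ≠ ⊤)
    {β : Type} [MeasurableSpace β] (ρ : Measure β) [IsFiniteMeasure ρ] :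
    μ.prod (c • ρ) = c • μ.prod ρ := by
  haveI h1 : IsFiniteMeasure (c • ρ) := smulFinite c hc ρ
  refine Measure.prod_eq fun s t hs ht => ?_
  simp only [Measure.smul_apply, Measure.prod_prod, smul_eq_mul]
  ring

private lemma mapMinMax (μ : Measure ℝ) {f g : ℝ → ℝ} (hf : Measurable f) (hg : Measurable g) :
    μ.map (fun x => min (f x) (g x)) + μ.map (fun x => max (f x) (g x)) = μ.map f + μ.map g := by
  ext s hs
  have hmin : Measurable fun x => min (f x) (g x) := hf.min hg
  have hmax : Measurable fun x => max (f x) (g x) := hf.max hg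
  have key : ∀ (h : ℝ → ℝ), Measurable h →
      μ (h ⁻¹' s) = ∫⁻ x, s.indicator (1 : ℝ → ℝ≥0∞) (h x) ∂μ := by
    intro h hh
    rw [← lintegral_map (measurable_one.indicator hs) hh, lintegral_indicator_one hs,
      Measure.map_apply hh hs]
  simp only [Measure.add_apply, Measure.map_apply hmin hs, Measure.map_apply hmax hs,
    Measure.map_apply hf hs, Measure.map_apply hg hs, key _ hmin, key _ hmax, key _ hf, key _ hg]
  have hc1 : Measurable fun x => s.indicator (1 : ℝ → ℝ≥0∞) (min (f x) (g x)) :=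
    (measurable_one.indicator hs).comp hmin
  have hc2 : Measurable fun x => s.indicator (1 : ℝ → ℝ≥0∞) (f x) :=
    (measurable_one.indicator hs).comp hf
  rw [← lintegral_add_left hc1, ← lintegral_add_left hc2]
  refine lintegral_congr fun x => ?_
  rcases le_total (f x) (g x) with h | h
  · rw [min_eq_left h, max_eq_right h]
  · rw [min_eq_right h, max_eq_left h, add_comm]

private lemma negMin (a b : ℝ) : -(min a b) = max (-a) (-b) := by
  rcases le_total a b with h | h
  · rw [min_eq_left h, max_eq_left (neg_le_neg h)]
  · rw [min_eq_right h, max_eq_right (neg_le_neg h)]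

private lemma negMax (a b : ℝ) : -(max a b) = min (-a) (-b) := by
  rcases le_total a b with h | h
  · rw [max_eq_right h, min_eq_right (neg_le_neg h)]
  · rw [max_eq_left h, min_eq_left (neg_le_neg h)]

private lemma bigShuffle {M : Type} [AddCommMonoid M]
    (I J In Jn A An B Bn U Un V Vn P Pn Q Qn R Rn S Sn MN MX MNn MXn : M)
    (hmm1 : MN + MX = Q + V) (hmm2 : MNn + MXn = Qn + Vn) :
    ((Jn + In) + (J + I)) +
      (((A + U) + (B + Vn)) +
      (((Bn + V) + (An + Un)) +
      (((Vn + B) + (U + A)) +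
      (((Un + An) + (V + Bn)) +
      (((P + R) + (Qn + S)) +
      (((Q + Sn) + (Pn + Rn)) +
      (((Rn + Pn) + (Sn + Q)) +
      ((S + Qn) + (R + P))))))))) =
    ((I + (((R + R) + (B + B)) + ((MN + MN) + (P + P)))) +
     (J + (((A + A) + (S + S)) + ((MX + MX) + (U + U))))) +
    ((In + (((Rn + Rn) + (Bn + Bn)) + ((MXn + MXn) + (Pn + Pn)))) +
     (Jn + (((An + An) + (Sn + Sn)) + ((MNn + MNn) + (Un + Un))))) := by
  have h : ((I + (((R + R) + (B + B)) + ((MN + MN) + (P + P)))) +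
     (J + (((A + A) + (S + S)) + ((MX + MX) + (U + U))))) +
    ((In + (((Rn + Rn) + (Bn + Bn)) + ((MXn + MXn) + (Pn + Pn)))) +
     (Jn + (((An + An) + (Sn + Sn)) + ((MNn + MNn) + (Un + Un))))) =
    (MN + MX) + ((MN + MX) + ((MNn + MXn) + ((MNn + MXn) +
      (I + (J + (In + (Jn + (R + (R + (B + (B + (P + (P + (A + (A + (S + (S + (U +
        (U + (Rn + (Rn + (Bn + (Bn + (Pn + (Pn + (An + (An + (Sn + (Sn + (Un + Un)
        ))))))))))))))))))))))))))))) := by abel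
  rw [h, hmm1, hmm2]
  abel

theorem stmt5 (ν : Measure ℝ) [IsProbabilityMeasure ν]
    (hsupp : ν (Set.Icc (0 : ℝ) 1)ᶜ = 0)
    (hrat : ν {x : ℝ | ¬ Irrational x} = 0)
    (hstat : (9 : ℝ≥0∞)⁻¹ • ν.map (HMap 0) +
        (2 / 9 : ℝ≥0∞) • ∑ i : Fin 4, ν.map (HMap i.succ) = ν)
    (lam : Measure ℝ)
    (hlam : lam = (ν.prod (bern.prod bern)).map
        (fun p : ℝ × ℝ × ℝ => p.2.2 * p.1 ^ p.2.1)) :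
    (9 : ℝ≥0∞)⁻¹ • ∑ i : Fin 9, lam.map (hMap i) = lam := by
  -- a.e. x, 0 < x < 1
  have h1 : ∀ᵐ x ∂ν, x ∈ Set.Icc (0:ℝ) 1 := ae_iff.2 hsupp
  have h2 : ∀ᵐ x ∂ν, Irrational x := ae_iff.2 hrat
  have hae : ∀ᵐ x ∂ν, 0 < x ∧ x < 1 := by
    filter_upwards [h1, h2] with x hx hirr
    exact ⟨lt_of_le_of_ne hx.1 (Ne.symm hirr.ne_zero), lt_of_le_of_ne hx.2 hirr.ne_one⟩
  have mc : ∀ f g : ℝ → ℝ, (∀ x, 0 < x → x < 1 → f x = g x) → ν.map f = ν.map g :=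
    fun f g h => Measure.map_congr (hae.mono fun x hx => h x hx.1 hx.2)
  -- bern is a probability measure
  haveI hbP : IsProbabilityMeasure bern := by
    constructor
    rw [show bern = (2 : ℝ≥0∞)⁻¹ • (Measure.dirac 1 + Measure.dirac (-1)) from rfl]
    simp only [Measure.smul_apply, Measure.add_apply, Measure.dirac_apply' _ MeasurableSet.univ,
      Set.indicator_univ, Pi.one_apply, smul_eq_mul]
    rw [show (1:ℝ≥0∞) + 1 = 2 by norm_num, ENNReal.inv_mul_cancel (by norm_num) (by norm_num)]
  -- measurability facts
  have hF : Measurable (fun p : ℝ × ℝ × ℝ => p.2.2 * p.1 ^ p.2.1) :=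
    (measurable_snd.snd).mul (measurable_fst.pow measurable_snd.fst)
  have mbI : Measurable fun x : ℝ => x := measurable_id'
  have mbJ : Measurable fun x : ℝ => x⁻¹ := measurable_inv
  have mbIn : Measurable fun x : ℝ => -x := measurable_neg
  have mbJn : Measurable fun x : ℝ => -x⁻¹ := mbJ.neg
  have mH1 : Measurable fun x : ℝ => (1 + x)⁻¹ := (measurable_const.add measurable_id).inv
  have mH2 : Measurable fun x : ℝ => 1 - x := measurable_const.sub measurable_id
  have mQ : Measurable fun x : ℝ => x / (1 - x) :=
    measurable_id.div (measurable_const.sub measurable_id)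
  have mV : Measurable fun x : ℝ => (1 - x) / x :=
    (measurable_const.sub measurable_id).div measurable_id
  have mH3 : Measurable fun x : ℝ => min (x / (1 - x)) ((1 - x) / x) := mQ.min mV
  have mH4 : Measurable fun x : ℝ => x / (1 + x) :=
    measurable_id.div (measurable_const.add measurable_id)
  -- decomposition of bern.prod bern
  have hb1 : ∀ y : ℝ × ℝ, True := fun _ => trivial
  have hb2 : ∀ y : ℝ, bern.prod (Measure.dirac y) =
      (2:ℝ≥0∞)⁻¹ • (Measure.dirac ((1:ℝ), y) + Measure.dirac ((-1:ℝ), y)) := by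
    intro y
    rw [Measure.prod_dirac]
    rw [show bern = (2 : ℝ≥0∞)⁻¹ • (Measure.dirac 1 + Measure.dirac (-1)) from rfl]
    rw [Measure.map_smul, Measure.map_add _ _ measurable_prodMk_right,
      Measure.map_dirac' measurable_prodMk_right, Measure.map_dirac' measurable_prodMk_right]
  have hbb : bern.prod bern = (2:ℝ≥0∞)⁻¹ • ((2:ℝ≥0∞)⁻¹ •
      ((Measure.dirac ((1:ℝ), (1:ℝ)) + Measure.dirac ((-1:ℝ), (1:ℝ))) +
       (Measure.dirac ((1:ℝ), (-1:ℝ)) + Measure.dirac ((-1:ℝ), (-1:ℝ))))) := by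
    calc bern.prod bern
        = bern.prod ((2 : ℝ≥0∞)⁻¹ • (Measure.dirac (1:ℝ) + Measure.dirac (-1:ℝ))) := rfl
      _ = (2:ℝ≥0∞)⁻¹ • bern.prod (Measure.dirac (1:ℝ) + Measure.dirac (-1:ℝ)) :=
          prodSmulRight bern _ (by norm_num) _
      _ = (2:ℝ≥0∞)⁻¹ • (bern.prod (Measure.dirac (1:ℝ)) + bern.prod (Measure.dirac (-1:ℝ))) := by
          rw [Measure.prod_add]
      _ = _ := by rw [hb2, hb2]; simp only [← smul_add]
  -- decomposition of lam
  have hc1 : ((fun p : ℝ × ℝ × ℝ => p.2.2 * p.1 ^ p.2.1) ∘ fun x : ℝ => (x, ((1:ℝ), (1:ℝ))))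
      = fun x : ℝ => x := by
    funext x; show (1:ℝ) * x ^ (1:ℝ) = x; rw [Real.rpow_one, one_mul]
  have hpm : ∀ x : ℝ, x ^ (-1:ℝ) = x⁻¹ := fun x => by
    rw [show (-1:ℝ) = ((-1:ℤ):ℝ) by norm_num, Real.rpow_intCast, zpow_neg, zpow_one]
  have hc2 : ((fun p : ℝ × ℝ × ℝ => p.2.2 * p.1 ^ p.2.1) ∘ fun x : ℝ => (x, ((-1:ℝ), (1:ℝ))))
      = fun x : ℝ => x⁻¹ := by
    funext x; show (1:ℝ) * x ^ (-1:ℝ) = x⁻¹; rw [hpm, one_mul]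
  have hc3 : ((fun p : ℝ × ℝ × ℝ => p.2.2 * p.1 ^ p.2.1) ∘ fun x : ℝ => (x, ((1:ℝ), (-1:ℝ))))
      = fun x : ℝ => -x := by
    funext x; show (-1:ℝ) * x ^ (1:ℝ) = -x; rw [Real.rpow_one]; ring
  have hc4 : ((fun p : ℝ × ℝ × ℝ => p.2.2 * p.1 ^ p.2.1) ∘ fun x : ℝ => (x, ((-1:ℝ), (-1:ℝ))))
      = fun x : ℝ => -x⁻¹ := by
    funext x; show (-1:ℝ) * x ^ (-1:ℝ) = -x⁻¹; rw [hpm]; ring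
  haveI hfin1 : IsFiniteMeasure ((2:ℝ≥0∞)⁻¹ •
      ((Measure.dirac ((1:ℝ), (1:ℝ)) + Measure.dirac ((-1:ℝ), (1:ℝ))) +
       (Measure.dirac ((1:ℝ), (-1:ℝ)) + Measure.dirac ((-1:ℝ), (-1:ℝ))))) :=
    smulFinite _ (by norm_num) _
  have hlam2 : lam = (2:ℝ≥0∞)⁻¹ • ((2:ℝ≥0∞)⁻¹ •
      ((ν.map (fun x : ℝ => x) + ν.map (fun x : ℝ => x⁻¹)) +
       (ν.map (fun x : ℝ => -x) + ν.map (fun x : ℝ => -x⁻¹)))) := by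
    rw [hlam, hbb]
    rw [prodSmulRight ν _ (by norm_num) _, prodSmulRight ν _ (by norm_num) _]
    rw [Measure.prod_add, Measure.prod_add, Measure.prod_add]
    rw [Measure.prod_dirac, Measure.prod_dirac, Measure.prod_dirac, Measure.prod_dirac]
    rw [Measure.map_smul, Measure.map_smul]
    rw [Measure.map_add _ _ hF, Measure.map_add _ _ hF, Measure.map_add _ _ hF]
    rw [Measure.map_map hF measurable_prodMk_right, Measure.map_map hF measurable_prodMk_right,
      Measure.map_map hF measurable_prodMk_right, Measure.map_map hF measurable_prodMk_right]
    rw [hc1, hc2, hc3, hc4]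
  -- expansion of lam.map h
  have expand : ∀ (h g1 g2 g3 g4 : ℝ → ℝ), Measurable h →
      (∀ x, 0 < x → x < 1 → h x = g1 x) →
      (∀ x, 0 < x → x < 1 → h x⁻¹ = g2 x) →
      (∀ x, 0 < x → x < 1 → h (-x) = g3 x) →
      (∀ x, 0 < x → x < 1 → h (-x⁻¹) = g4 x) →
      lam.map h = (2:ℝ≥0∞)⁻¹ • ((2:ℝ≥0∞)⁻¹ •
        ((ν.map g1 + ν.map g2) + (ν.map g3 + ν.map g4))) := by
    intro h g1 g2 g3 g4 hh p1 p2 p3 p4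
    rw [hlam2, Measure.map_smul, Measure.map_smul, Measure.map_add _ _ hh,
      Measure.map_add _ _ hh, Measure.map_add _ _ hh,
      Measure.map_map hh mbI, Measure.map_map hh mbJ,
      Measure.map_map hh mbIn, Measure.map_map hh mbJn,
      mc (h ∘ fun x : ℝ => x) g1 (fun x a b => p1 x a b),
      mc (h ∘ fun x : ℝ => x⁻¹) g2 (fun x a b => p2 x a b),
      mc (h ∘ fun x : ℝ => -x) g3 (fun x a b => p3 x a b),
      mc (h ∘ fun x : ℝ => -x⁻¹) g4 (fun x a b => p4 x a b)]
  -- the stationarity equation, multiplied by 9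
  simp only [Fin.sum_univ_four,
    show HMap 0 = (fun x : ℝ => x) from rfl,
    show HMap (0:Fin 4).succ = (fun x : ℝ => (1+x)⁻¹) from rfl,
    show HMap (1:Fin 4).succ = (fun x : ℝ => 1 - x) from rfl,
    show HMap (2:Fin 4).succ = (fun x : ℝ => min (x/(1-x)) ((1-x)/x)) from rfl,
    show HMap (3:Fin 4).succ = (fun x : ℝ => x/(1+x)) from rfl,
    Measure.map_id'] at hstat
  have h9 : (9:ℝ≥0∞) • ν = ν +
      (((ν.map (fun x : ℝ => (1+x)⁻¹) + ν.map (fun x : ℝ => (1+x)⁻¹)) +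
        (ν.map (fun x : ℝ => 1 - x) + ν.map (fun x : ℝ => 1 - x))) +
       ((ν.map (fun x : ℝ => min (x/(1-x)) ((1-x)/x)) +
         ν.map (fun x : ℝ => min (x/(1-x)) ((1-x)/x))) +
        (ν.map (fun x : ℝ => x/(1+x)) + ν.map (fun x : ℝ => x/(1+x))))) := by
    have e1 : (9:ℝ≥0∞) * 9⁻¹ = 1 := ENNReal.mul_inv_cancel (by norm_num) (by norm_num)
    have e2 : (9:ℝ≥0∞) * (2/9) = 2 := by
      rw [div_eq_mul_inv, mul_comm (2:ℝ≥0∞), ← mul_assoc, e1, one_mul]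
    conv_lhs => rw [← hstat]
    rw [smul_add, smul_smul, smul_smul, e1, e2, one_smul]
    congr 1
    rw [show (2:ℝ≥0∞) = 1 + 1 by norm_num]
    simp only [add_smul, one_smul]
    abel
  -- expansion of 9 • ν.map b
  have expand9 : ∀ (b g1 g2 g3 g4 : ℝ → ℝ), Measurable b →
      (∀ x, 0 < x → x < 1 → b ((1+x)⁻¹) = g1 x) →
      (∀ x, 0 < x → x < 1 → b (1-x) = g2 x) →
      (∀ x, 0 < x → x < 1 → b (min (x/(1-x)) ((1-x)/x)) = g3 x) →
      (∀ x, 0 < x → x < 1 → b (x/(1+x)) = g4 x) →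
      (9:ℝ≥0∞) • ν.map b = ν.map b +
        (((ν.map g1 + ν.map g1) + (ν.map g2 + ν.map g2)) +
         ((ν.map g3 + ν.map g3) + (ν.map g4 + ν.map g4))) := by
    intro b g1 g2 g3 g4 hb q1 q2 q3 q4
    rw [← Measure.map_smul, h9, Measure.map_add _ _ hb, Measure.map_add _ _ hb,
      Measure.map_add _ _ hb, Measure.map_add _ _ hb, Measure.map_add _ _ hb,
      Measure.map_add _ _ hb, Measure.map_add _ _ hb, Measure.map_add _ _ hb,
      Measure.map_map hb mH1, Measure.map_map hb mH2, Measure.map_map hb mH3,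
      Measure.map_map hb mH4,
      mc (b ∘ fun x : ℝ => (1+x)⁻¹) g1 (fun x u v => q1 x u v),
      mc (b ∘ fun x : ℝ => 1 - x) g2 (fun x u v => q2 x u v),
      mc (b ∘ fun x : ℝ => min (x/(1-x)) ((1-x)/x)) g3 (fun x u v => q3 x u v),
      mc (b ∘ fun x : ℝ => x/(1+x)) g4 (fun x u v => q4 x u v)]
  -- inverse of the min
  have hminv : ∀ x : ℝ, 0 < x → x < 1 →
      (min (x/(1-x)) ((1-x)/x))⁻¹ = max (x/(1-x)) ((1-x)/x) := by
    intro x h0 h1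
    have hx : x ≠ 0 := ne_of_gt h0
    have ha : (1:ℝ) - x ≠ 0 := ne_of_gt (by linarith)
    have hab : (x/(1-x)) * ((1-x)/x) = 1 := by field_simp
    rcases le_total (x/(1-x)) ((1-x)/x) with h | h
    · rw [min_eq_left h, max_eq_right h, inv_eq_of_mul_eq_one_right hab]
    · rw [min_eq_right h, max_eq_left h, inv_eq_of_mul_eq_one_left hab]
  -- the four branch expansions
  have r1 := expand9 (fun x : ℝ => x) (fun x : ℝ => (1+x)⁻¹) (fun x : ℝ => 1 - x)
    (fun x : ℝ => min (x/(1-x)) ((1-x)/x)) (fun x : ℝ => x/(1+x)) mbI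
    (fun x _ _ => rfl) (fun x _ _ => rfl) (fun x _ _ => rfl) (fun x _ _ => rfl)
  have r2 := expand9 (fun x : ℝ => x⁻¹) (fun x : ℝ => 1 + x) (fun x : ℝ => (1-x)⁻¹)
    (fun x : ℝ => max (x/(1-x)) ((1-x)/x)) (fun x : ℝ => (1+x)/x) mbJ
    (fun x _ _ => inv_inv (1+x)) (fun x _ _ => rfl)
    (fun x u v => hminv x u v) (fun x _ _ => inv_div x (1+x))
  have r3 := expand9 (fun x : ℝ => -x) (fun x : ℝ => -(1+x)⁻¹) (fun x : ℝ => -(1-x))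
    (fun x : ℝ => max (-(x/(1-x))) (-((1-x)/x))) (fun x : ℝ => -(x/(1+x))) mbIn
    (fun x _ _ => rfl) (fun x _ _ => rfl) (fun x _ _ => negMin (x/(1-x)) ((1-x)/x)) (fun x _ _ => rfl)
  have r4 := expand9 (fun x : ℝ => -x⁻¹) (fun x : ℝ => -(1+x)) (fun x : ℝ => -(1-x)⁻¹)
    (fun x : ℝ => min (-(x/(1-x))) (-((1-x)/x))) (fun x : ℝ => -((1+x)/x)) mbJn
    (fun x _ _ => by beta_reduce; rw [inv_inv]) (fun x _ _ => rfl)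
    (fun x u v => by beta_reduce; rw [hminv x u v]; exact negMax _ _) (fun x _ _ => by beta_reduce; rw [inv_div])
  -- the min/max exchange
  have mm1 : ν.map (fun x : ℝ => min (x/(1-x)) ((1-x)/x)) +
      ν.map (fun x : ℝ => max (x/(1-x)) ((1-x)/x)) =
      ν.map (fun x : ℝ => x/(1-x)) + ν.map (fun x : ℝ => (1-x)/x) := mapMinMax ν mQ mV
  have mm2 : ν.map (fun x : ℝ => min (-(x/(1-x))) (-((1-x)/x))) +
      ν.map (fun x : ℝ => max (-(x/(1-x))) (-((1-x)/x))) =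
      ν.map (fun x : ℝ => -(x/(1-x))) + ν.map (fun x : ℝ => -((1-x)/x)) :=
    mapMinMax ν mQ.neg mV.neg
  -- the nine rows
  have e0 := expand (fun x : ℝ => -x⁻¹) (fun x : ℝ => -x⁻¹) (fun x : ℝ => -x)
    (fun x : ℝ => x⁻¹) (fun x : ℝ => x) mbJn
    (fun x _ _ => rfl) (fun x _ _ => by beta_reduce; rw [inv_inv])
    (fun x _ _ => by beta_reduce; rw [inv_neg, neg_neg]) (fun x _ _ => by beta_reduce; rw [inv_neg, inv_inv, neg_neg])
  have e1 := expand (fun x : ℝ => 1 + x) (fun x : ℝ => 1 + x) (fun x : ℝ => (1+x)/x)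
    (fun x : ℝ => 1 - x) (fun x : ℝ => -((1-x)/x)) (measurable_const.add measurable_id)
    (fun x _ _ => rfl)
    (by intro x h0 h1
        beta_reduce
        have hx : x ≠ 0 := ne_of_gt h0
        field_simp
        try ring
        try (exact Or.inl trivial)
        try (rw [← sub_one_mul, show x - (1:ℝ) = -1 + x from by ring, mul_inv_cancel₀ hd])
        try (rw [show -(x * (-1 + x)⁻¹) + x ^ 2 * (-1 + x)⁻¹ = x * ((-1 + x) * (-1 + x)⁻¹) from by ring,
          mul_inv_cancel₀ hd, mul_one]))
    (fun x _ _ => by beta_reduce; ring)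
    (by intro x h0 h1
        beta_reduce
        have hx : x ≠ 0 := ne_of_gt h0
        field_simp
        try ring
        try (exact Or.inl trivial)
        try (rw [← sub_one_mul, show x - (1:ℝ) = -1 + x from by ring, mul_inv_cancel₀ hd])
        try (rw [show -(x * (-1 + x)⁻¹) + x ^ 2 * (-1 + x)⁻¹ = x * ((-1 + x) * (-1 + x)⁻¹) from by ring,
          mul_inv_cancel₀ hd, mul_one]))
  have e2 := expand (fun x : ℝ => x - 1) (fun x : ℝ => -(1-x)) (fun x : ℝ => (1-x)/x)
    (fun x : ℝ => -(1+x)) (fun x : ℝ => -((1+x)/x)) (measurable_id.sub measurable_const)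
    (fun x _ _ => by beta_reduce; ring)
    (by intro x h0 h1
        beta_reduce
        have hx : x ≠ 0 := ne_of_gt h0
        field_simp
        try ring
        try (exact Or.inl trivial)
        try (rw [← sub_one_mul, show x - (1:ℝ) = -1 + x from by ring, mul_inv_cancel₀ hd])
        try (rw [show -(x * (-1 + x)⁻¹) + x ^ 2 * (-1 + x)⁻¹ = x * ((-1 + x) * (-1 + x)⁻¹) from by ring,
          mul_inv_cancel₀ hd, mul_one]))
    (fun x _ _ => by beta_reduce; ring)
    (by intro x h0 h1
        beta_reduce
        have hx : x ≠ 0 := ne_of_gt h0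
        field_simp
        try ring
        try (exact Or.inl trivial)
        try (rw [← sub_one_mul, show x - (1:ℝ) = -1 + x from by ring, mul_inv_cancel₀ hd])
        try (rw [show -(x * (-1 + x)⁻¹) + x ^ 2 * (-1 + x)⁻¹ = x * ((-1 + x) * (-1 + x)⁻¹) from by ring,
          mul_inv_cancel₀ hd, mul_one]))
  have e3 := expand (fun x : ℝ => 1 - x⁻¹) (fun x : ℝ => -((1-x)/x)) (fun x : ℝ => 1 - x)
    (fun x : ℝ => (1+x)/x) (fun x : ℝ => 1 + x) (measurable_const.sub measurable_inv)
    (by intro x h0 h1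
        beta_reduce
        have hx : x ≠ 0 := ne_of_gt h0
        field_simp
        try ring
        try (exact Or.inl trivial)
        try (rw [← sub_one_mul, show x - (1:ℝ) = -1 + x from by ring, mul_inv_cancel₀ hd])
        try (rw [show -(x * (-1 + x)⁻¹) + x ^ 2 * (-1 + x)⁻¹ = x * ((-1 + x) * (-1 + x)⁻¹) from by ring,
          mul_inv_cancel₀ hd, mul_one]))
    (fun x _ _ => by beta_reduce; rw [inv_inv])
    (by intro x h0 h1
        beta_reduce
        have hx : x ≠ 0 := ne_of_gt h0
        rw [inv_neg]
        field_simp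
        try ring
        try (exact Or.inl trivial)
        try (rw [← sub_one_mul, show x - (1:ℝ) = -1 + x from by ring, mul_inv_cancel₀ hd])
        try (rw [show -(x * (-1 + x)⁻¹) + x ^ 2 * (-1 + x)⁻¹ = x * ((-1 + x) * (-1 + x)⁻¹) from by ring,
          mul_inv_cancel₀ hd, mul_one]))
    (fun x _ _ => by beta_reduce; rw [inv_neg, inv_inv]; ring)
  have e4 := expand (fun x : ℝ => -1 - x⁻¹) (fun x : ℝ => -((1+x)/x)) (fun x : ℝ => -(1+x))
    (fun x : ℝ => (1-x)/x) (fun x : ℝ => -(1-x)) (measurable_const.sub measurable_inv)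
    (by intro x h0 h1
        beta_reduce
        have hx : x ≠ 0 := ne_of_gt h0
        field_simp
        try ring
        try (exact Or.inl trivial)
        try (rw [← sub_one_mul, show x - (1:ℝ) = -1 + x from by ring, mul_inv_cancel₀ hd])
        try (rw [show -(x * (-1 + x)⁻¹) + x ^ 2 * (-1 + x)⁻¹ = x * ((-1 + x) * (-1 + x)⁻¹) from by ring,
          mul_inv_cancel₀ hd, mul_one]))
    (fun x _ _ => by beta_reduce; rw [inv_inv]; ring)
    (by intro x h0 h1
        beta_reduce
        have hx : x ≠ 0 := ne_of_gt h0
        rw [inv_neg]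
        field_simp
        try ring
        try (exact Or.inl trivial)
        try (rw [← sub_one_mul, show x - (1:ℝ) = -1 + x from by ring, mul_inv_cancel₀ hd])
        try (rw [show -(x * (-1 + x)⁻¹) + x ^ 2 * (-1 + x)⁻¹ = x * ((-1 + x) * (-1 + x)⁻¹) from by ring,
          mul_inv_cancel₀ hd, mul_one]))
    (fun x _ _ => by beta_reduce; rw [inv_neg, inv_inv]; ring)
  have e5 := expand (fun x : ℝ => x / (1 + x)) (fun x : ℝ => x/(1+x)) (fun x : ℝ => (1+x)⁻¹)
    (fun x : ℝ => -(x/(1-x))) (fun x : ℝ => (1-x)⁻¹)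
    (measurable_id.div (measurable_const.add measurable_id))
    (fun x _ _ => rfl)
    (by intro x h0 h1
        beta_reduce
        have hx : x ≠ 0 := ne_of_gt h0
        have hb : (1:ℝ) + x ≠ 0 := ne_of_gt (by linarith)
        field_simp
        try ring
        try (exact Or.inl trivial)
        try (rw [add_comm]; exact div_self (fun hcc => hb (by linarith)))
    )
    (fun x _ _ => by beta_reduce; rw [show (1:ℝ) + -x = 1 - x from by ring, neg_div])
    (by intro x h0 h1
        beta_reduce
        have hx : x ≠ 0 := ne_of_gt h0
        have ha : (1:ℝ) - x ≠ 0 := ne_of_gt (by linarith)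
        have hc : x - 1 ≠ 0 := ne_of_lt (by linarith)
        have hd : (-1:ℝ) + x ≠ 0 := ne_of_lt (by linarith)
        field_simp
        try ring
        try (exact Or.inl trivial)
        try (rw [← sub_one_mul, show x - (1:ℝ) = -1 + x from by ring, mul_inv_cancel₀ hd])
        try (rw [show -(x * (-1 + x)⁻¹) + x ^ 2 * (-1 + x)⁻¹ = x * ((-1 + x) * (-1 + x)⁻¹) from by ring,
          mul_inv_cancel₀ hd, mul_one]))
  have e6 := expand (fun x : ℝ => x / (1 - x)) (fun x : ℝ => x/(1-x)) (fun x : ℝ => -(1-x)⁻¹)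
    (fun x : ℝ => -(x/(1+x))) (fun x : ℝ => -(1+x)⁻¹)
    (measurable_id.div (measurable_const.sub measurable_id))
    (fun x _ _ => rfl)
    (by intro x h0 h1
        beta_reduce
        have hx : x ≠ 0 := ne_of_gt h0
        have ha : (1:ℝ) - x ≠ 0 := ne_of_gt (by linarith)
        have hc : x - 1 ≠ 0 := ne_of_lt (by linarith)
        field_simp
        try ring
        try (exact Or.inl trivial)
        try (rw [← sub_one_mul, show x - (1:ℝ) = -1 + x from by ring, mul_inv_cancel₀ hd])
        try (rw [show -(x * (-1 + x)⁻¹) + x ^ 2 * (-1 + x)⁻¹ = x * ((-1 + x) * (-1 + x)⁻¹) from by ring,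
          mul_inv_cancel₀ hd, mul_one]))
    (fun x _ _ => by beta_reduce; rw [show (1:ℝ) - -x = 1 + x from by ring, neg_div])
    (by intro x h0 h1
        beta_reduce
        have hx : x ≠ 0 := ne_of_gt h0
        have hb : (1:ℝ) + x ≠ 0 := ne_of_gt (by linarith)
        field_simp
        try ring
        try (exact Or.inl trivial)
        try (rw [← sub_one_mul, show x - (1:ℝ) = -1 + x from by ring, mul_inv_cancel₀ hd])
        try (rw [show -(x * (-1 + x)⁻¹) + x ^ 2 * (-1 + x)⁻¹ = x * ((-1 + x) * (-1 + x)⁻¹) from by ring,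
          mul_inv_cancel₀ hd, mul_one])
        have hk : x * (1 + x)⁻¹ + (1 + x)⁻¹ = 1 := by rw [← add_one_mul x, add_comm x 1, mul_inv_cancel₀ hb]
        linarith)
  have e7 := expand (fun x : ℝ => -(1 + x)⁻¹) (fun x : ℝ => -(1+x)⁻¹) (fun x : ℝ => -(x/(1+x)))
    (fun x : ℝ => -(1-x)⁻¹) (fun x : ℝ => x/(1-x))
    (((measurable_const.add measurable_id).inv).neg)
    (fun x _ _ => rfl)
    (by intro x h0 h1
        beta_reduce
        have hx : x ≠ 0 := ne_of_gt h0
        have hb : (1:ℝ) + x ≠ 0 := ne_of_gt (by linarith)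
        field_simp
        try ring
        try (exact Or.inl trivial)
        try (rw [← sub_one_mul, show x - (1:ℝ) = -1 + x from by ring, mul_inv_cancel₀ hd])
        try (rw [show -(x * (-1 + x)⁻¹) + x ^ 2 * (-1 + x)⁻¹ = x * ((-1 + x) * (-1 + x)⁻¹) from by ring,
          mul_inv_cancel₀ hd, mul_one]))
    (fun x _ _ => by beta_reduce; rw [show (1:ℝ) + -x = 1 - x from by ring])
    (by intro x h0 h1
        beta_reduce
        have hx : x ≠ 0 := ne_of_gt h0
        have ha : (1:ℝ) - x ≠ 0 := ne_of_gt (by linarith)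
        have hc : x - 1 ≠ 0 := ne_of_lt (by linarith)
        have hd : (-1:ℝ) + x ≠ 0 := ne_of_lt (by linarith)
        field_simp
        try ring
        try (exact Or.inl trivial)
        try (rw [← sub_one_mul, show x - (1:ℝ) = -1 + x from by ring, mul_inv_cancel₀ hd])
        try (rw [show -(x * (-1 + x)⁻¹) + x ^ 2 * (-1 + x)⁻¹ = x * ((-1 + x) * (-1 + x)⁻¹) from by ring,
          mul_inv_cancel₀ hd, mul_one]))
  have e8 := expand (fun x : ℝ => (1 - x)⁻¹) (fun x : ℝ => (1-x)⁻¹) (fun x : ℝ => -(x/(1-x)))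
    (fun x : ℝ => (1+x)⁻¹) (fun x : ℝ => x/(1+x))
    ((measurable_const.sub measurable_id).inv)
    (fun x _ _ => rfl)
    (by intro x h0 h1
        beta_reduce
        have hx : x ≠ 0 := ne_of_gt h0
        have ha : (1:ℝ) - x ≠ 0 := ne_of_gt (by linarith)
        have hc : x - 1 ≠ 0 := ne_of_lt (by linarith)
        field_simp
        try ring
        try (exact Or.inl trivial)
        try (rw [← sub_one_mul, show x - (1:ℝ) = -1 + x from by ring, mul_inv_cancel₀ hd])
        try (rw [show -(x * (-1 + x)⁻¹) + x ^ 2 * (-1 + x)⁻¹ = x * ((-1 + x) * (-1 + x)⁻¹) from by ring,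
          mul_inv_cancel₀ hd, mul_one]))
    (fun x _ _ => by beta_reduce; rw [show (1:ℝ) - -x = 1 + x from by ring])
    (by intro x h0 h1
        beta_reduce
        have hx : x ≠ 0 := ne_of_gt h0
        have hb : (1:ℝ) + x ≠ 0 := ne_of_gt (by linarith)
        field_simp
        try ring
        try (exact Or.inl trivial)
        try (rw [add_comm]; exact div_self (fun hcc => hb (by linarith)))
        rw [← add_one_mul x, add_comm x 1, mul_inv_cancel₀ hb]
    )
  -- the key identity
  have hsum : ∑ i : Fin 9, lam.map (hMap i) =
      lam.map (fun x : ℝ => -x⁻¹) + (lam.map (fun x : ℝ => 1 + x) +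
      (lam.map (fun x : ℝ => x - 1) + (lam.map (fun x : ℝ => 1 - x⁻¹) +
      (lam.map (fun x : ℝ => -1 - x⁻¹) + (lam.map (fun x : ℝ => x / (1 + x)) +
      (lam.map (fun x : ℝ => x / (1 - x)) + (lam.map (fun x : ℝ => -(1 + x)⁻¹) +
        lam.map (fun x : ℝ => (1 - x)⁻¹)))))))) := by
    simp [Fin.sum_univ_succ]
    rfl
  have key : ∑ i : Fin 9, lam.map (hMap i) = (9:ℝ≥0∞) • lam := by
    rw [hsum, e0, e1, e2, e3, e4, e5, e6, e7, e8, hlam2]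
    have hcomm : ∀ z : Measure ℝ, (9:ℝ≥0∞) • (2:ℝ≥0∞)⁻¹ • z = (2:ℝ≥0∞)⁻¹ • (9:ℝ≥0∞) • z :=
      fun z => by rw [smul_smul, smul_smul, mul_comm]
    rw [hcomm, hcomm]
    simp only [← smul_add]
    congr 1
    congr 1
    rw [smul_add, smul_add, smul_add, r1, r2, r3, r4]
    exact bigShuffle _ _ _ _ _ _ _ _ _ _ _ _ _ _ _ _ _ _ _ _ _ _ _ _ mm1 mm2
  rw [key, smul_smul, ENNReal.inv_mul_cancel (by norm_num) (by norm_num), one_smul]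
end

section
/- Let ν be a probability measure on [0,1] satisfying (H₂)_*ν = ν and (H₃)_*ν = ν. Then (1/9)(H₀)_*ν + (2/9) Σ_{i=1}^{4} (H_i)_*ν = ν; in particular (1/2)((H₁)_*ν + (H₄)_*ν) = ν. Equivalently, if W₀ ~ ν and I is an independent random index with P(I=0)=1/9 and P(I=i)=2/9 for i=1,2,3,4, then H_I(W₀) ~ ν. -/
open MeasureTheory ProbabilityTheory Filter
open scoped ENNReal

lemma stmt8_m1 : Measurable (HMap 1) := by
  show Measurable fun x : ℝ => (1 + x)⁻¹
  exact (measurable_const.add measurable_id).inv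

lemma stmt8_m2 : Measurable (HMap 2) := by
  show Measurable fun x : ℝ => 1 - x
  exact measurable_const.sub measurable_id

lemma stmt8_m3 : Measurable (HMap 3) := by
  show Measurable fun x : ℝ => min (x / (1 - x)) ((1 - x) / x)
  exact (measurable_id.div (measurable_const.sub measurable_id)).min
    ((measurable_const.sub measurable_id).div measurable_id)

lemma stmt8_m4 : Measurable (HMap 4) := by
  show Measurable fun x : ℝ => x / (1 + x)
  exact measurable_id.div (measurable_const.add measurable_id)

lemma stmt8_key4A : ∀ x ∈ Set.Icc (0:ℝ) (1/2), (HMap 4 ∘ HMap 3) x = id x := by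
  rintro x ⟨hx0, hx1⟩
  show (min (x / (1 - x)) ((1 - x) / x)) / (1 + min (x / (1 - x)) ((1 - x) / x)) = x
  rcases eq_or_lt_of_le hx0 with h0 | h0
  · subst h0; norm_num
  · have h1 : (0:ℝ) < 1 - x := by linarith
    have hmin : min (x / (1 - x)) ((1 - x) / x) = x / (1 - x) :=
      min_eq_left (by rw [div_le_div_iff₀ h1 h0]; nlinarith)
    rw [hmin]
    have hne : (1:ℝ) + x / (1 - x) = 1 / (1 - x) := by field_simp; ring
    rw [hne]
    field_simp

lemma stmt8_key4B : ∀ x ∈ Set.Ioc (1/2:ℝ) 1, (HMap 4 ∘ HMap 3) x = HMap 2 x := by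
  rintro x ⟨hx0, hx1⟩
  show (min (x / (1 - x)) ((1 - x) / x)) / (1 + min (x / (1 - x)) ((1 - x) / x)) = 1 - x
  rcases eq_or_lt_of_le hx1 with h1 | h1
  · subst h1; norm_num
  · have h1' : (0:ℝ) < 1 - x := by linarith
    have h0 : (0:ℝ) < x := by linarith
    have hmin : min (x / (1 - x)) ((1 - x) / x) = (1 - x) / x :=
      min_eq_right (by rw [div_le_div_iff₀ h0 h1']; nlinarith)
    rw [hmin]
    have hne : (1:ℝ) + (1 - x) / x = 1 / x := by field_simp; ring
    rw [hne]
    field_simp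

lemma stmt8_key1A : ∀ x ∈ Set.Icc (0:ℝ) (1/2), (HMap 1 ∘ HMap 3) x = HMap 2 x := by
  rintro x ⟨hx0, hx1⟩
  show (1 + min (x / (1 - x)) ((1 - x) / x))⁻¹ = 1 - x
  rcases eq_or_lt_of_le hx0 with h0 | h0
  · subst h0; norm_num
  · have h1 : (0:ℝ) < 1 - x := by linarith
    have hmin : min (x / (1 - x)) ((1 - x) / x) = x / (1 - x) :=
      min_eq_left (by rw [div_le_div_iff₀ h1 h0]; nlinarith)
    rw [hmin]
    have hne : (1:ℝ) + x / (1 - x) = 1 / (1 - x) := by field_simp; ring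
    rw [hne, one_div, inv_inv]

lemma stmt8_key1B : ∀ x ∈ Set.Ioc (1/2:ℝ) 1, (HMap 1 ∘ HMap 3) x = id x := by
  rintro x ⟨hx0, hx1⟩
  show (1 + min (x / (1 - x)) ((1 - x) / x))⁻¹ = x
  rcases eq_or_lt_of_le hx1 with h1 | h1
  · subst h1; norm_num
  · have h1' : (0:ℝ) < 1 - x := by linarith
    have h0 : (0:ℝ) < x := by linarith
    have hmin : min (x / (1 - x)) ((1 - x) / x) = (1 - x) / x :=
      min_eq_right (by rw [div_le_div_iff₀ h0 h1']; nlinarith)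
    rw [hmin]
    have hne : (1:ℝ) + (1 - x) / x = 1 / x := by field_simp; ring
    rw [hne, one_div, inv_inv]

theorem stmt8 (ν : Measure ℝ) [IsProbabilityMeasure ν]
    (hsupp : ν (Set.Icc (0 : ℝ) 1)ᶜ = 0)
    (h2 : ν.map (HMap 2) = ν) (h3 : ν.map (HMap 3) = ν) :
    ((9 : ℝ≥0∞)⁻¹ • ν.map (HMap 0) +
        (2 / 9 : ℝ≥0∞) • ∑ i : Fin 4, ν.map (HMap i.succ) = ν) ∧
    (2 : ℝ≥0∞)⁻¹ • (ν.map (HMap 1) + ν.map (HMap 4)) = ν := by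
  set A : Set ℝ := Set.Icc 0 (1/2) with hAdef
  set B : Set ℝ := Set.Ioc (1/2) 1 with hBdef
  have hA : MeasurableSet A := measurableSet_Icc
  have hB : MeasurableSet B := measurableSet_Ioc
  have hunion : A ∪ B = Set.Icc 0 1 :=
    Set.Icc_union_Ioc_eq_Icc (by norm_num) (by norm_num)
  have hdisj : Disjoint A B :=
    Set.disjoint_left.2 fun x hx hx' => absurd hx.2 (not_le.2 hx'.1)
  have hrestrict : ν.restrict A + ν.restrict B = ν := by
    rw [← Measure.restrict_union hdisj hB, hunion]
    exact Measure.restrict_eq_self_of_ae_mem (by rw [MeasureTheory.ae_iff]; exact hsupp)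
  have split : ∀ f g₁ g₂ : ℝ → ℝ, Measurable f →
      (∀ x ∈ A, f x = g₁ x) → (∀ x ∈ B, f x = g₂ x) →
      ν.map f = (ν.restrict A).map g₁ + (ν.restrict B).map g₂ := by
    intro f g₁ g₂ hf h₁ h₂
    conv_lhs => rw [← hrestrict]
    rw [Measure.map_add _ _ hf,
      Measure.map_congr (Filter.eventuallyEq_of_mem (self_mem_ae_restrict hA) h₁),
      Measure.map_congr (Filter.eventuallyEq_of_mem (self_mem_ae_restrict hB) h₂)]
  have hmap4 : ν.map (HMap 4) = ν.restrict A + (ν.restrict B).map (HMap 2) := by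
    conv_lhs => rw [← h3, Measure.map_map stmt8_m4 stmt8_m3]
    rw [split _ id (HMap 2) (stmt8_m4.comp stmt8_m3) stmt8_key4A stmt8_key4B,
      Measure.map_id]
  have hmap1 : ν.map (HMap 1) = (ν.restrict A).map (HMap 2) + ν.restrict B := by
    conv_lhs => rw [← h3, Measure.map_map stmt8_m1 stmt8_m3]
    rw [split _ (HMap 2) id (stmt8_m1.comp stmt8_m3) stmt8_key1A stmt8_key1B,
      Measure.map_id]
  have hm : (ν.restrict A).map (HMap 2) + (ν.restrict B).map (HMap 2) = ν := by
    rw [← Measure.map_add _ _ stmt8_m2, hrestrict, h2]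
  have hsum : ν.map (HMap 1) + ν.map (HMap 4) = ν + ν := by
    calc ν.map (HMap 1) + ν.map (HMap 4)
        = ((ν.restrict A).map (HMap 2) + ν.restrict B)
            + (ν.restrict A + (ν.restrict B).map (HMap 2)) := by rw [hmap1, hmap4]
      _ = (ν.restrict A + ν.restrict B)
            + ((ν.restrict A).map (HMap 2) + (ν.restrict B).map (HMap 2)) := by abel
      _ = ν + ν := by rw [hrestrict, hm]
  have half : (2 : ℝ≥0∞)⁻¹ • (ν.map (HMap 1) + ν.map (HMap 4)) = ν := by
    rw [hsum, ← two_smul ℝ≥0∞ ν, smul_smul, ENNReal.inv_mul_cancel two_ne_zero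
      ENNReal.ofNat_ne_top, one_smul]
  refine ⟨?_, half⟩
  have h0 : ν.map (HMap 0) = ν := by
    rw [show HMap 0 = id from rfl, Measure.map_id]
  have hsum4 : ∑ i : Fin 4, ν.map (HMap i.succ)
      = ν.map (HMap 1) + ν.map (HMap 2) + ν.map (HMap 3) + ν.map (HMap 4) := by
    rw [Fin.sum_univ_four]; rfl
  rw [h0, hsum4, h2, h3]
  have : ν.map (HMap 1) + ν + ν + ν.map (HMap 4)
      = (ν.map (HMap 1) + ν.map (HMap 4)) + ν + ν := by abel
  rw [this, hsum]
  have : ν + ν + ν + ν = (4 : ℝ≥0∞) • ν := by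
    rw [show (4:ℝ≥0∞) = 1+1+1+1 by norm_num]
    simp [add_smul]
  rw [this, smul_smul, ← add_smul]
  rw [show (9:ℝ≥0∞)⁻¹ + 2/9*4 = 1 by
    rw [show (9:ℝ≥0∞)⁻¹ = 1/9 by rw [one_div], ENNReal.div_eq_inv_mul,
      ENNReal.div_eq_inv_mul, mul_assoc, ← mul_add,
      show (1:ℝ≥0∞) + 2*4 = 9 by norm_num,
      ENNReal.inv_mul_cancel (by norm_num) (by norm_num)], one_smul]
end

section
/- Let ν be an atomless probability measure on [0,1] satisfying (H₂)_*ν = ν and (H₃)_*ν = ν. Then ν = μ⋆, i.e. ν is the law of the random continued fraction [K₁,K₂,…] where K₁,K₂,… are i.i.d. with P(K_i = n) = 2^{-n} for n = 1,2,…. -/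
open MeasureTheory ProbabilityTheory Filter
open scoped ENNReal

namespace Stmt9

noncomputable def g0 (x : ℝ) : ℝ := x / (1 + x)
noncomputable def g1 (x : ℝ) : ℝ := (1 + x)⁻¹

noncomputable def ep : List Bool → ℝ × ℝ
  | [] => (0, 1)
  | false :: s => (g0 (ep s).1, g0 (ep s).2)
  | true :: s => (g1 (ep s).2, g1 (ep s).1)

noncomputable def lo (s : List Bool) : ℝ := (ep s).1
noncomputable def hi (s : List Bool) : ℝ := (ep s).2

def SB (s : List Bool) : Set ℝ := Set.Icc (lo s) (hi s)

@[simp] lemma lo_nil : lo [] = 0 := rfl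
@[simp] lemma hi_nil : hi [] = 1 := rfl
@[simp] lemma lo_false (s : List Bool) : lo (false :: s) = g0 (lo s) := rfl
@[simp] lemma hi_false (s : List Bool) : hi (false :: s) = g0 (hi s) := rfl
@[simp] lemma lo_true (s : List Bool) : lo (true :: s) = g1 (hi s) := rfl
@[simp] lemma hi_true (s : List Bool) : hi (true :: s) = g1 (lo s) := rfl

lemma g0_nonneg {a : ℝ} (ha : 0 ≤ a) : 0 ≤ g0 a := by
  unfold g0; positivity

lemma g0_mono {a b : ℝ} (ha : 0 ≤ a) (hab : a ≤ b) : g0 a ≤ g0 b := by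
  unfold g0
  rw [div_le_div_iff₀ (by linarith) (by linarith)]
  nlinarith

lemma g0_le_half {a : ℝ} (ha : 0 ≤ a) (ha1 : a ≤ 1) : g0 a ≤ 1/2 := by
  unfold g0
  rw [div_le_div_iff₀ (by linarith) (by norm_num)]
  nlinarith

lemma g1_pos {a : ℝ} (ha : 0 ≤ a) : 0 < g1 a := by
  unfold g1; positivity

lemma g1_anti {a b : ℝ} (ha : 0 ≤ a) (hab : a ≤ b) : g1 b ≤ g1 a := by
  unfold g1
  rw [inv_le_inv₀ (by linarith) (by linarith)]
  linarith

lemma g1_le_one {a : ℝ} (ha : 0 ≤ a) : g1 a ≤ 1 := by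
  unfold g1
  rw [inv_le_one₀ (by linarith)]
  linarith

lemma half_le_g1 {a : ℝ} (ha : 0 ≤ a) (ha1 : a ≤ 1) : 1/2 ≤ g1 a := by
  unfold g1
  rw [le_inv_comm₀ (by norm_num) (by linarith)]
  linarith

lemma g0_add_g1 {a : ℝ} (ha : 0 ≤ a) : g0 a + g1 a = 1 := by
  unfold g0 g1
  field_simp
  ring

lemma bounds : ∀ s : List Bool, 0 ≤ lo s ∧ lo s ≤ hi s ∧ hi s ≤ 1 := by
  intro s
  induction s with
  | nil => norm_num
  | cons b t ih =>
    obtain ⟨h0, h1, h2⟩ := ih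
    cases b with
    | false =>
      refine ⟨g0_nonneg h0, g0_mono h0 h1, ?_⟩
      calc g0 (hi t) ≤ 1/2 := g0_le_half (by linarith) h2
        _ ≤ 1 := by norm_num
    | true =>
      exact ⟨le_of_lt (g1_pos (le_trans h0 h1)), g1_anti h0 h1, g1_le_one h0⟩

lemma lo_nonneg (s : List Bool) : 0 ≤ lo s := (bounds s).1
lemma lo_le_hi (s : List Bool) : lo s ≤ hi s := (bounds s).2.1
lemma hi_le_one (s : List Bool) : hi s ≤ 1 := (bounds s).2.2

lemma mem_SB_false {s : List Bool} {x : ℝ} :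
    x ∈ SB (false :: s) ↔ 0 ≤ x ∧ x ≤ 1/2 ∧ x / (1 - x) ∈ SB s := by
  obtain ⟨h0, h1, h2⟩ := bounds s
  simp only [SB, Set.mem_Icc, lo_false, hi_false]
  constructor
  · rintro ⟨hl, hr⟩
    have hx0 : 0 ≤ x := le_trans (g0_nonneg h0) hl
    have hxh : x ≤ 1/2 := le_trans hr (g0_le_half (by linarith) h2)
    have h1x : (0:ℝ) < 1 - x := by linarith
    refine ⟨hx0, hxh, ?_, ?_⟩
    · rw [le_div_iff₀ h1x]
      rw [g0, div_le_iff₀ (by linarith)] at hl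
      nlinarith
    · rw [div_le_iff₀ h1x]
      rw [g0, le_div_iff₀ (by linarith)] at hr
      nlinarith
  · rintro ⟨hx0, hxh, hl, hr⟩
    have h1x : (0:ℝ) < 1 - x := by linarith
    rw [le_div_iff₀ h1x] at hl
    rw [div_le_iff₀ h1x] at hr
    constructor
    · rw [g0, div_le_iff₀ (by linarith)]; nlinarith
    · rw [g0, le_div_iff₀ (by linarith)]; nlinarith

lemma mem_SB_true {s : List Bool} {x : ℝ} :
    x ∈ SB (true :: s) ↔ 1/2 ≤ x ∧ x ≤ 1 ∧ (1 - x) / x ∈ SB s := by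
  obtain ⟨h0, h1, h2⟩ := bounds s
  simp only [SB, Set.mem_Icc, lo_true, hi_true]
  constructor
  · rintro ⟨hl, hr⟩
    have hxh : 1/2 ≤ x := le_trans (half_le_g1 (by linarith) h2) hl
    have hx1 : x ≤ 1 := le_trans hr (g1_le_one h0)
    have hx0 : (0:ℝ) < x := by linarith
    rw [g1, ← one_div, div_le_iff₀ (by linarith)] at hl
    rw [g1, ← one_div, le_div_iff₀ (by linarith)] at hr
    refine ⟨hxh, hx1, ?_, ?_⟩
    · rw [le_div_iff₀ hx0]; nlinarith
    · rw [div_le_iff₀ hx0]; nlinarith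
  · rintro ⟨hxh, hx1, hl, hr⟩
    have hx0 : (0:ℝ) < x := by linarith
    rw [le_div_iff₀ hx0] at hl
    rw [div_le_iff₀ hx0] at hr
    constructor
    · rw [g1, ← one_div, div_le_iff₀ (by linarith)]; nlinarith
    · rw [g1, ← one_div, le_div_iff₀ (by linarith)]; nlinarith


lemma g0_fix {x : ℝ} (hx : x < 1) : g0 (x / (1 - x)) = x := by
  have h : (1:ℝ) - x ≠ 0 := by linarith
  have h2 : 1 + x / (1 - x) = 1 / (1 - x) := by field_simp; ring
  unfold g0
  rw [h2]
  field_simp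

lemma g1_fix {x : ℝ} (hx : x ≠ 0) : g1 ((1 - x) / x) = x := by
  have h2 : 1 + (1 - x) / x = 1 / x := by field_simp; ring
  unfold g1
  rw [h2, one_div, inv_inv]

lemma SB_inter_endpoint : ∀ (s s' : List Bool), s.length = s'.length → s ≠ s' →
    ∀ x, x ∈ SB s → x ∈ SB s' → x = lo s ∨ x = hi s := by
  intro s
  induction s with
  | nil =>
    intro s' hlen hne
    rw [List.length_nil] at hlen
    exact absurd (List.length_eq_zero_iff.mp hlen.symm).symm hne
  | cons b t ih =>
    intro s' hlen hne x hx hx'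
    cases s' with
    | nil => simp at hlen
    | cons b' t' =>
      simp only [List.length_cons, Nat.add_right_cancel_iff] at hlen
      cases b <;> cases b'
      · -- false, false
        obtain ⟨hx0, hxh, hy⟩ := mem_SB_false.mp hx
        obtain ⟨_, _, hy'⟩ := mem_SB_false.mp hx'
        have hne' : t ≠ t' := fun h => hne (by rw [h])
        have hfix : g0 (x / (1 - x)) = x := g0_fix (by linarith)
        rcases ih t' hlen hne' _ hy hy' with h | h
        · left; rw [lo_false, ← h, hfix]
        · right; rw [hi_false, ← h, hfix]
      · -- false, true
        obtain ⟨hx0, hxh, hy⟩ := mem_SB_false.mp hx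
        obtain ⟨hxh', _, _⟩ := mem_SB_true.mp hx'
        have hxeq : x = 1/2 := le_antisymm hxh hxh'
        right
        have h1 : x ≤ hi (false :: t) := hx.2
        have h2 : hi (false :: t) ≤ 1/2 := g0_le_half (le_trans (lo_nonneg t) (lo_le_hi t)) (hi_le_one t)
        linarith [le_antisymm (hxeq ▸ h2) (hxeq ▸ h1)]
      · -- true, false
        obtain ⟨hxh, _, _⟩ := mem_SB_true.mp hx
        obtain ⟨_, hxh', _⟩ := mem_SB_false.mp hx'
        have hxeq : x = 1/2 := le_antisymm hxh' hxh
        left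
        have h1 : lo (true :: t) ≤ x := hx.1
        have h2 : 1/2 ≤ lo (true :: t) := half_le_g1 (le_trans (lo_nonneg t) (lo_le_hi t)) (hi_le_one t)
        linarith
      · -- true, true
        obtain ⟨hxh, hx1, hy⟩ := mem_SB_true.mp hx
        obtain ⟨_, _, hy'⟩ := mem_SB_true.mp hx'
        have hne' : t ≠ t' := fun h => hne (by rw [h])
        have hfix : g1 ((1 - x) / x) = x := g1_fix (by intro h; rw [h] at hxh; norm_num at hxh)
        rcases ih t' hlen hne' _ hy hy' with h | h
        · right; rw [hi_true, ← h, hfix]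
        · left; rw [lo_true, ← h, hfix]

lemma lo_eq_zero : ∀ s : List Bool, lo s = 0 → s = List.replicate s.length false := by
  intro s
  induction s with
  | nil => simp
  | cons b t ih =>
    cases b with
    | false =>
      intro h
      rw [lo_false, g0, div_eq_zero_iff] at h
      have hlt : lo t = 0 := by
        rcases h with h | h
        · exact h
        · linarith [lo_nonneg t]
      simp only [List.length_cons, List.replicate_succ]
      exact List.cons_eq_cons.mpr ⟨rfl, ih hlt⟩
    | true =>
      intro h
      exfalso
      have := g1_pos (le_trans (lo_nonneg t) (lo_le_hi t))
      rw [lo_true] at h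
      linarith

def topw : ℕ → List Bool
  | 0 => []
  | n+1 => true :: List.replicate n false

@[simp] lemma topw_length (n : ℕ) : (topw n).length = n := by
  cases n <;> simp [topw]

lemma hi_eq_one : ∀ s : List Bool, hi s = 1 → s = topw s.length := by
  intro s
  induction s with
  | nil => simp [topw]
  | cons b t _ =>
    cases b with
    | false =>
      intro h
      exfalso
      have := g0_le_half (le_trans (lo_nonneg t) (lo_le_hi t)) (hi_le_one t)
      rw [hi_false] at h
      linarith
    | true =>
      intro h
      rw [hi_true, g1, inv_eq_one] at h
      have hlt : lo t = 0 := by linarith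
      have := lo_eq_zero t hlt
      simp only [List.length_cons, topw]
      exact List.cons_eq_cons.mpr ⟨rfl, this⟩

lemma pair_lemma : ∀ (n : ℕ) (q : ℝ), ∃ s₁ s₂ : List Bool, s₁.length = n ∧ s₂.length = n ∧
    ∀ s : List Bool, s.length = n → q ∈ SB s → s = s₁ ∨ s = s₂ := by
  intro n
  induction n with
  | zero =>
    intro q
    exact ⟨[], [], rfl, rfl, fun s hs _ => Or.inl (List.length_eq_zero_iff.mp hs)⟩
  | succ n ih =>
    intro q
    rcases lt_trichotomy q (1/2) with hq | hq | hq
    · obtain ⟨t₁, t₂, h₁, h₂, hmain⟩ := ih (q / (1 - q))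
      refine ⟨false :: t₁, false :: t₂, by simp [h₁], by simp [h₂], ?_⟩
      intro s hs hmem
      cases s with
      | nil => simp at hs
      | cons b t =>
        have hlt : t.length = n := by simpa using hs
        cases b with
        | true => exact absurd (mem_SB_true.mp hmem).1 (by linarith)
        | false =>
          obtain ⟨_, _, hy⟩ := mem_SB_false.mp hmem
          rcases hmain t hlt hy with h | h
          · exact Or.inl (by rw [h])
          · exact Or.inr (by rw [h])
    · refine ⟨false :: topw n, true :: topw n, by simp, by simp, ?_⟩
      intro s hs hmem
      cases s with
      | nil => simp at hs
      | cons b t =>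
        have hlt : t.length = n := by simpa using hs
        cases b with
        | false =>
          obtain ⟨_, _, hy⟩ := mem_SB_false.mp hmem
          have hone : (1:ℝ) ∈ SB t := by
            have : q / (1 - q) = 1 := by rw [hq]; norm_num
            rwa [this] at hy
          have hhi : hi t = 1 := le_antisymm (hi_le_one t) hone.2
          left
          rw [hi_eq_one t hhi, hlt]
        | true =>
          obtain ⟨_, _, hy⟩ := mem_SB_true.mp hmem
          have hone : (1:ℝ) ∈ SB t := by
            have : (1 - q) / q = 1 := by rw [hq]; norm_num
            rwa [this] at hy
          have hhi : hi t = 1 := le_antisymm (hi_le_one t) hone.2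
          right
          rw [hi_eq_one t hhi, hlt]
    · obtain ⟨t₁, t₂, h₁, h₂, hmain⟩ := ih ((1 - q) / q)
      refine ⟨true :: t₁, true :: t₂, by simp [h₁], by simp [h₂], ?_⟩
      intro s hs hmem
      cases s with
      | nil => simp at hs
      | cons b t =>
        have hlt : t.length = n := by simpa using hs
        cases b with
        | false => exact absurd (mem_SB_false.mp hmem).2.1 (by linarith)
        | true =>
          obtain ⟨_, _, hy⟩ := mem_SB_true.mp hmem
          rcases hmain t hlt hy with h | h
          · exact Or.inl (by rw [h])
          · exact Or.inr (by rw [h])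

lemma lo_hi_append : ∀ t : List Bool,
    (lo (t ++ [false]) = lo t ∧ hi (t ++ [false]) = lo (t ++ [true]) ∧ hi (t ++ [true]) = hi t)
  ∨ (lo (t ++ [true]) = lo t ∧ hi (t ++ [true]) = lo (t ++ [false]) ∧ hi (t ++ [false]) = hi t) := by
  intro t
  induction t with
  | nil =>
    left
    refine ⟨?_, ?_, ?_⟩ <;> · show _ = _; norm_num [g0, g1]
  | cons b u ih =>
    cases b with
    | false =>
      rcases ih with ⟨e1, e2, e3⟩ | ⟨e1, e2, e3⟩
      · left
        exact ⟨by simp only [List.cons_append, lo_false, e1],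
               by simp only [List.cons_append, hi_false, lo_false, e2],
               by simp only [List.cons_append, hi_false, e3]⟩
      · right
        exact ⟨by simp only [List.cons_append, lo_false, e1],
               by simp only [List.cons_append, hi_false, lo_false, e2],
               by simp only [List.cons_append, hi_false, e3]⟩
    | true =>
      rcases ih with ⟨e1, e2, e3⟩ | ⟨e1, e2, e3⟩
      · right
        exact ⟨by simp only [List.cons_append, lo_true, e3],
               by simp only [List.cons_append, hi_true, lo_true, e2],
               by simp only [List.cons_append, hi_true, e1]⟩
      · left
        exact ⟨by simp only [List.cons_append, lo_true, e3],
               by simp only [List.cons_append, hi_true, lo_true, e2],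
               by simp only [List.cons_append, hi_true, e1]⟩

lemma SB_split (t : List Bool) : SB t = SB (t ++ [false]) ∪ SB (t ++ [true]) := by
  rcases lo_hi_append t with ⟨e1, e2, e3⟩ | ⟨e1, e2, e3⟩
  · rw [SB, SB, SB, e1, e2, e3, Set.Icc_union_Icc_eq_Icc]
    · rw [← e2, ← e1]; exact lo_le_hi _
    · rw [← e3]; exact lo_le_hi _
  · rw [SB, SB, SB, e1, e2, e3, Set.union_comm, Set.Icc_union_Icc_eq_Icc]
    · rw [← e2, ← e1]; exact lo_le_hi _
    · rw [← e3]; exact lo_le_hi _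

lemma exists_SB {x : ℝ} (hx : x ∈ Set.Icc (0:ℝ) 1) :
    ∀ n, ∃ s : List Bool, s.length = n ∧ x ∈ SB s := by
  intro n
  induction n with
  | zero => exact ⟨[], rfl, hx⟩
  | succ n ih =>
    obtain ⟨s, hlen, hmem⟩ := ih
    rw [SB_split] at hmem
    rcases hmem with h | h
    · exact ⟨s ++ [false], by simp [hlen], h⟩
    · exact ⟨s ++ [true], by simp [hlen], h⟩

def shiftSeq (k : ℕ → ℕ) : ℕ → ℕ := fun n => k (n+1)

def decSeq (k : ℕ → ℕ) : ℕ → ℕ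
  | 0 => k 0 - 1
  | n+1 => k (n+1)

noncomputable def conv (k : ℕ → ℕ) (n : ℕ) : ℝ :=
  ((List.range n).map k).foldr (fun a r => ((a : ℝ) + r)⁻¹) 0

lemma conv_succ (k : ℕ → ℕ) (n : ℕ) :
    conv k (n+1) = ((k 0 : ℝ) + conv (shiftSeq k) n)⁻¹ := by
  unfold conv
  rw [List.range_succ_eq_map]
  simp only [List.map_cons, List.foldr_cons, List.map_map]
  rfl

noncomputable def approx (k : ℕ → ℕ) : ℕ → ℝ → ℝ
  | 0, t => t
  | n+1, t => approx k n (((k n : ℝ) + t)⁻¹)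

lemma approx_succ_front (k : ℕ → ℕ) (n : ℕ) (t : ℝ) :
    approx k (n+1) t = ((k 0 : ℝ) + approx (shiftSeq k) n t)⁻¹ := by
  induction n generalizing t with
  | zero => rfl
  | succ n ih =>
    show approx k (n+1) (((k (n+1) : ℝ) + t)⁻¹) = _
    rw [ih]
    rfl

lemma conv_eq_approx (k : ℕ → ℕ) (n : ℕ) : conv k n = approx k n 0 := by
  induction n generalizing k with
  | zero => rfl
  | succ n ih => rw [conv_succ, approx_succ_front, ih]

lemma approx_mem {k : ℕ → ℕ} (hk : ∀ i, 1 ≤ k i) :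
    ∀ (n : ℕ) (t : ℝ), 0 ≤ t → t ≤ 1 → 0 ≤ approx k n t ∧ approx k n t ≤ 1 := by
  intro n
  induction n with
  | zero => exact fun t h0 h1 => ⟨h0, h1⟩
  | succ n ih =>
    intro t h0 h1
    have hkn : (1:ℝ) ≤ (k n : ℝ) := by exact_mod_cast hk n
    have hpos : (0:ℝ) < (k n : ℝ) + t := by linarith
    refine ih _ (by positivity) ?_
    rw [inv_le_one₀ hpos]
    linarith

lemma single_lip {a t t' : ℝ} (ha : 1 ≤ a) (ht : 0 ≤ t) (ht' : 0 ≤ t') :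
    |(a + t)⁻¹ - (a + t')⁻¹| ≤ |t - t'| := by
  have h1 : (0:ℝ) < a + t := by linarith
  have h2 : (0:ℝ) < a + t' := by linarith
  have key : (a + t)⁻¹ - (a + t')⁻¹ = (t' - t) / ((a + t) * (a + t')) := by
    field_simp
    ring
  rw [key, abs_div, abs_of_pos (mul_pos h1 h2), abs_sub_comm]
  refine div_le_self (abs_nonneg _) ?_
  nlinarith

lemma pair_contract {a b t t' : ℝ} (ha : 1 ≤ a) (hb : 1 ≤ b) (ht : 0 ≤ t) (ht' : 0 ≤ t') :
    |(a + (b + t)⁻¹)⁻¹ - (a + (b + t')⁻¹)⁻¹| ≤ (1/4) * |t - t'| := by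
  have hbt : (0:ℝ) < b + t := by linarith
  have hbt' : (0:ℝ) < b + t' := by linarith
  have hf1 : (2:ℝ) ≤ a*(b+t)+1 := by
    nlinarith [mul_le_mul ha (show (1:ℝ) ≤ b + t by linarith) (by norm_num) (by linarith : (0:ℝ) ≤ a)]
  have hf2 : (2:ℝ) ≤ a*(b+t')+1 := by
    nlinarith [mul_le_mul ha (show (1:ℝ) ≤ b + t' by linarith) (by norm_num) (by linarith : (0:ℝ) ≤ a)]
  have hD : (0:ℝ) < (a*(b+t)+1) * (a*(b+t')+1) := by nlinarith
  have e1 : (a + (b+t)⁻¹)⁻¹ = (b+t) / (a*(b+t)+1) := by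
    rw [eq_div_iff (by linarith)]
    field_simp
  have e2 : (a + (b+t')⁻¹)⁻¹ = (b+t') / (a*(b+t')+1) := by
    rw [eq_div_iff (by linarith)]
    field_simp
  have hnum : (b+t) * (a*(b+t')+1) - (a*(b+t)+1) * (b+t') = t - t' := by ring
  have key : (a + (b + t)⁻¹)⁻¹ - (a + (b + t')⁻¹)⁻¹
      = (t - t') / ((a*(b+t)+1) * (a*(b+t')+1)) := by
    rw [e1, e2, div_sub_div _ _ (by linarith) (by linarith), hnum]
  rw [key, abs_div, abs_of_pos hD, div_le_iff₀ hD]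
  have h4 : (4:ℝ) ≤ (a*(b+t)+1) * (a*(b+t')+1) := by nlinarith
  nlinarith [abs_nonneg (t - t'), mul_le_mul_of_nonneg_left h4 (by positivity : (0:ℝ) ≤ 1/4 * |t - t'|)]

lemma approx_lip : ∀ (n : ℕ) (k : ℕ → ℕ), (∀ i, 1 ≤ k i) →
    ∀ (t t' : ℝ), 0 ≤ t → t ≤ 1 → 0 ≤ t' → t' ≤ 1 →
    |approx k n t - approx k n t'| ≤ 2 * (1/2)^n * |t - t'| := by
  have main : ∀ (n : ℕ),
      (∀ (k : ℕ → ℕ), (∀ i, 1 ≤ k i) → ∀ (t t' : ℝ), 0 ≤ t → t ≤ 1 → 0 ≤ t' → t' ≤ 1 →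
        |approx k n t - approx k n t'| ≤ 2 * (1/2)^n * |t - t'|) ∧
      (∀ (k : ℕ → ℕ), (∀ i, 1 ≤ k i) → ∀ (t t' : ℝ), 0 ≤ t → t ≤ 1 → 0 ≤ t' → t' ≤ 1 →
        |approx k (n+1) t - approx k (n+1) t'| ≤ 2 * (1/2)^(n+1) * |t - t'|) := by
    intro n
    induction n with
    | zero =>
      constructor
      · intro k hk t t' h0 h1 h0' h1'
        simp only [approx, pow_zero, mul_one]
        nlinarith [abs_nonneg (t - t')]
      · intro k hk t t' h0 h1 h0' h1'
        have hk0 : (1:ℝ) ≤ (k 0 : ℝ) := by exact_mod_cast hk 0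
        show |((k 0 : ℝ) + t)⁻¹ - ((k 0 : ℝ) + t')⁻¹| ≤ _
        calc |((k 0 : ℝ) + t)⁻¹ - ((k 0 : ℝ) + t')⁻¹| ≤ |t - t'| := single_lip hk0 h0 h0'
          _ ≤ 2 * (1/2)^1 * |t - t'| := by norm_num
    | succ n ih =>
      refine ⟨ih.2, ?_⟩
      intro k hk t t' h0 h1 h0' h1'
      have hkn : (1:ℝ) ≤ (k n : ℝ) := by exact_mod_cast hk n
      have hkn1 : (1:ℝ) ≤ (k (n+1) : ℝ) := by exact_mod_cast hk (n+1)
      have e : ∀ u : ℝ, approx k (n+2) u = approx k n (((k n : ℝ) + ((k (n+1) : ℝ) + u)⁻¹)⁻¹) :=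
        fun u => rfl
      rw [e t, e t']
      have hPt : (0:ℝ) ≤ (((k n : ℝ) + ((k (n+1) : ℝ) + t)⁻¹))⁻¹ ∧
          (((k n : ℝ) + ((k (n+1) : ℝ) + t)⁻¹))⁻¹ ≤ 1 := by
        constructor
        · positivity
        · rw [inv_le_one₀ (by positivity)]
          have : (0:ℝ) ≤ ((k (n+1) : ℝ) + t)⁻¹ := by positivity
          linarith
      have hPt' : (0:ℝ) ≤ (((k n : ℝ) + ((k (n+1) : ℝ) + t')⁻¹))⁻¹ ∧
          (((k n : ℝ) + ((k (n+1) : ℝ) + t')⁻¹))⁻¹ ≤ 1 := by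
        constructor
        · positivity
        · rw [inv_le_one₀ (by positivity)]
          have : (0:ℝ) ≤ ((k (n+1) : ℝ) + t')⁻¹ := by positivity
          linarith
      calc |approx k n (((k n : ℝ) + ((k (n+1) : ℝ) + t)⁻¹)⁻¹)
            - approx k n (((k n : ℝ) + ((k (n+1) : ℝ) + t')⁻¹)⁻¹)|
          ≤ 2 * (1/2)^n * |(((k n : ℝ) + ((k (n+1) : ℝ) + t)⁻¹)⁻¹)
            - (((k n : ℝ) + ((k (n+1) : ℝ) + t')⁻¹)⁻¹)| :=
            ih.1 k hk _ _ hPt.1 hPt.2 hPt'.1 hPt'.2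
        _ ≤ 2 * (1/2)^n * ((1/4) * |t - t'|) := by
            have := pair_contract hkn hkn1 h0 h0'
            have hnn : (0:ℝ) ≤ 2 * (1/2)^n := by positivity
            exact mul_le_mul_of_nonneg_left this hnn
        _ = 2 * (1/2)^(n+2) * |t - t'| := by ring
  exact fun n => (main n).1

def dropSeq (k : ℕ → ℕ) (n : ℕ) : ℕ → ℕ := fun i => k (i + n)

lemma approx_split (k : ℕ → ℕ) :
    ∀ (n j : ℕ) (t : ℝ), approx k (n + j) t = approx k n (approx (dropSeq k n) j t) := by
  intro n
  induction n generalizing k with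
  | zero =>
    intro j t
    rw [Nat.zero_add]
    show approx k j t = approx (fun i => k (i + 0)) j t
    rfl
  | succ n ih =>
    intro j t
    rw [Nat.succ_add, approx_succ_front, ih (shiftSeq k) j t, approx_succ_front]
    rfl

lemma conv_bound {k : ℕ → ℕ} (hk : ∀ i, 1 ≤ k i) (n j j' : ℕ) :
    |conv k (n+j) - conv k (n+j')| ≤ 2 * (1/2)^n := by
  have hdrop : ∀ i, 1 ≤ dropSeq k n i := fun i => hk _
  rw [conv_eq_approx, conv_eq_approx, approx_split, approx_split]
  have m1 := approx_mem hdrop j 0 le_rfl zero_le_one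
  have m2 := approx_mem hdrop j' 0 le_rfl zero_le_one
  calc |approx k n (approx (dropSeq k n) j 0) - approx k n (approx (dropSeq k n) j' 0)|
      ≤ 2 * (1/2)^n * |approx (dropSeq k n) j 0 - approx (dropSeq k n) j' 0| :=
        approx_lip n k hk _ _ m1.1 m1.2 m2.1 m2.2
    _ ≤ 2 * (1/2)^n * 1 := by
        have : |approx (dropSeq k n) j 0 - approx (dropSeq k n) j' 0| ≤ 1 :=
          abs_le.mpr ⟨by linarith [m1.1, m2.2], by linarith [m1.2, m2.1]⟩
        have hnn : (0:ℝ) ≤ 2 * (1/2)^n := by positivity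
        exact mul_le_mul_of_nonneg_left this hnn
    _ = 2 * (1/2)^n := mul_one _

lemma conv_tendsto {k : ℕ → ℕ} (hk : ∀ i, 1 ≤ k i) :
    Tendsto (conv k) atTop (nhds (cfVal k)) := by
  have hc : CauchySeq (conv k) := by
    apply cauchySeq_of_le_geometric (1/2) 2 (by norm_num)
    intro n
    rw [Real.dist_eq]
    have := conv_bound hk n 0 1
    rw [Nat.add_zero] at this
    exact this
  obtain ⟨L, hL⟩ := cauchySeq_tendsto_of_complete hc
  have h2 : cfVal k = L := hL.limUnder_eq
  rw [h2]
  exact hL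

lemma conv_mem {k : ℕ → ℕ} (hk : ∀ i, 1 ≤ k i) (n : ℕ) :
    conv k n ∈ Set.Icc (0:ℝ) 1 := by
  rw [conv_eq_approx]
  exact Set.mem_Icc.mpr ⟨(approx_mem hk n 0 le_rfl zero_le_one).1,
    (approx_mem hk n 0 le_rfl zero_le_one).2⟩

lemma cfVal_mem {k : ℕ → ℕ} (hk : ∀ i, 1 ≤ k i) : cfVal k ∈ Set.Icc (0:ℝ) 1 :=
  isClosed_Icc.mem_of_tendsto (conv_tendsto hk) (Eventually.of_forall (conv_mem hk))

lemma g0_inv {x : ℝ} (hx : 0 < x) : g0 x⁻¹ = (x + 1)⁻¹ := by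
  unfold g0
  field_simp

lemma valid_shift {k : ℕ → ℕ} (hk : ∀ i, 1 ≤ k i) : ∀ i, 1 ≤ shiftSeq k i := fun i => hk _

lemma valid_dec {k : ℕ → ℕ} (hk : ∀ i, 1 ≤ k i) (h2 : 2 ≤ k 0) : ∀ i, 1 ≤ decSeq k i := by
  intro i
  cases i with
  | zero => show 1 ≤ k 0 - 1; omega
  | succ n => exact hk (n+1)

lemma shift_dec (k : ℕ → ℕ) : shiftSeq (decSeq k) = shiftSeq k := by
  funext n
  rfl

lemma conv_dec {k : ℕ → ℕ} (hk : ∀ i, 1 ≤ k i) (h2k : 2 ≤ k 0) (j : ℕ) :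
    conv k (j+1) = g0 (conv (decSeq k) (j+1)) := by
  rw [conv_succ, conv_succ, shift_dec]
  have hc : 0 ≤ conv (shiftSeq k) j := (conv_mem (valid_shift hk) j).1
  have hk0 : (2:ℝ) ≤ (k 0 : ℝ) := by exact_mod_cast h2k
  have hcast : ((decSeq k 0 : ℕ) : ℝ) = (k 0 : ℝ) - 1 := by
    show ((k 0 - 1 : ℕ) : ℝ) = _
    have : 1 ≤ k 0 := hk 0
    push_cast [this]
    ring
  rw [hcast, g0_inv (by linarith)]
  ring_nf

lemma conv_shift1 {k : ℕ → ℕ} (h1 : k 0 = 1) (j : ℕ) :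
    conv k (j+1) = g1 (conv (shiftSeq k) j) := by
  rw [conv_succ, h1]
  unfold g1
  norm_num

def Cyl : List Bool → Set (ℕ → ℕ)
  | [] => Set.univ
  | false :: s => {k | 2 ≤ k 0} ∩ decSeq ⁻¹' Cyl s
  | true :: s => {k | k 0 = 1} ∩ shiftSeq ⁻¹' Cyl s

lemma measurable_shiftSeq : Measurable shiftSeq :=
  measurable_pi_lambda _ (fun n => measurable_pi_apply (n+1))

lemma measurable_decSeq : Measurable decSeq := by
  apply measurable_pi_lambda
  intro n
  cases n with
  | zero => exact (measurable_from_nat (f := fun m => m - 1)).comp (measurable_pi_apply 0)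
  | succ m => exact measurable_pi_apply (m+1)

lemma cyl_measurable : ∀ s : List Bool, MeasurableSet (Cyl s) := by
  intro s
  induction s with
  | nil => exact MeasurableSet.univ
  | cons b t ih =>
    cases b with
    | false =>
      show MeasurableSet ({k : ℕ → ℕ | 2 ≤ k 0} ∩ decSeq ⁻¹' Cyl t)
      exact ((measurable_pi_apply 0) (MeasurableSet.of_discrete)).inter
        (measurable_decSeq ih)
    | true =>
      show MeasurableSet ({k : ℕ → ℕ | k 0 = 1} ∩ shiftSeq ⁻¹' Cyl t)
      have h : MeasurableSet ((fun f : ℕ → ℕ => f 0) ⁻¹' {m : ℕ | m = 1}) :=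
        (measurable_pi_apply 0) (MeasurableSet.of_discrete)
      exact h.inter (measurable_shiftSeq ih)

lemma conv_mem_of_cyl : ∀ (s : List Bool) (k : ℕ → ℕ), (∀ i, 1 ≤ k i) → k ∈ Cyl s →
    ∃ N, ∀ m ≥ N, conv k m ∈ SB s := by
  intro s
  induction s with
  | nil => exact fun k hk _ => ⟨0, fun m _ => conv_mem hk m⟩
  | cons b t ih =>
    intro k hk hmem
    cases b with
    | false =>
      obtain ⟨h2k, hcyl⟩ := hmem
      obtain ⟨N, hN⟩ := ih (decSeq k) (valid_dec hk h2k) hcyl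
      refine ⟨N+1, fun m hm => ?_⟩
      obtain ⟨j, rfl⟩ : ∃ j, m = j + 1 := ⟨m - 1, by omega⟩
      rw [conv_dec hk h2k j]
      have hj := hN (j+1) (by omega)
      have hnn : 0 ≤ conv (decSeq k) (j+1) := le_trans (lo_nonneg t) hj.1
      exact ⟨g0_mono (lo_nonneg t) hj.1, g0_mono hnn hj.2⟩
    | true =>
      obtain ⟨h1k, hcyl⟩ := hmem
      obtain ⟨N, hN⟩ := ih (shiftSeq k) (valid_shift hk) hcyl
      refine ⟨N+1, fun m hm => ?_⟩
      obtain ⟨j, rfl⟩ : ∃ j, m = j + 1 := ⟨m - 1, by omega⟩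
      rw [conv_shift1 h1k j]
      have hj := hN j (by omega)
      have hnn : 0 ≤ conv (shiftSeq k) j := le_trans (lo_nonneg t) hj.1
      exact ⟨g1_anti hnn hj.2, g1_anti (lo_nonneg t) hj.1⟩

lemma cyl_total : ∀ (n : ℕ) (k : ℕ → ℕ), (∀ i, 1 ≤ k i) →
    ∃ s : List Bool, s.length = n ∧ k ∈ Cyl s := by
  intro n
  induction n with
  | zero => exact fun k _ => ⟨[], rfl, Set.mem_univ k⟩
  | succ n ih =>
    intro k hk
    by_cases h : k 0 = 1
    · obtain ⟨s, hl, hc⟩ := ih (shiftSeq k) (valid_shift hk)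
      exact ⟨true :: s, by simp [hl], h, hc⟩
    · have h2 : 2 ≤ k 0 := by have := hk 0; omega
      obtain ⟨s, hl, hc⟩ := ih (decSeq k) (valid_dec hk h2)
      exact ⟨false :: s, by simp [hl], h2, hc⟩

lemma cfVal_mem_of_cyl {s : List Bool} {k : ℕ → ℕ} (hk : ∀ i, 1 ≤ k i) (hc : k ∈ Cyl s) :
    cfVal k ∈ SB s := by
  obtain ⟨N, hN⟩ := conv_mem_of_cyl s k hk hc
  exact isClosed_Icc.mem_of_tendsto (conv_tendsto hk) (eventually_atTop.mpr ⟨N, hN⟩)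

lemma geomHalf_apply (A : Set ℕ) :
    geomHalf A = ∑' n : ℕ, Set.indicator A (fun m => ((2:ℝ≥0∞)^m)⁻¹) (n+1) := by
  rw [geomHalf, Measure.sum_apply _ (MeasurableSet.of_discrete (s := A))]
  congr 1
  funext n
  rw [Measure.smul_apply, Measure.dirac_apply' _ (MeasurableSet.of_discrete (s := A)), smul_eq_mul]
  by_cases h : (n+1) ∈ A
  · rw [Set.indicator_of_mem h, Set.indicator_of_mem h]
    simp
  · rw [Set.indicator_of_notMem h, Set.indicator_of_notMem h, mul_zero]

lemma geomHalf_univ : geomHalf Set.univ = 1 := by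
  rw [geomHalf_apply]
  simp only [Set.indicator_univ]
  calc ∑' n : ℕ, ((2:ℝ≥0∞)^(n+1))⁻¹
      = ∑' n : ℕ, (2⁻¹:ℝ≥0∞)^n * 2⁻¹ := by
        congr 1; funext n
        rw [pow_succ, ENNReal.mul_inv (by simp) (by simp), ENNReal.inv_pow]
    _ = (1 - (2⁻¹:ℝ≥0∞))⁻¹ * 2⁻¹ := by rw [ENNReal.tsum_mul_right, ENNReal.tsum_geometric]
    _ = 1 := by
        rw [ENNReal.one_sub_inv_two, inv_inv]
        exact ENNReal.mul_inv_cancel (by norm_num) (by norm_num)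

lemma geomHalf_one : geomHalf {1} = 2⁻¹ := by
  rw [geomHalf_apply]
  rw [tsum_eq_single 0 ?_]
  · rw [Set.indicator_of_mem (by simp : (0+1 : ℕ) ∈ ({1} : Set ℕ))]
    norm_num
  · intro n hn
    exact Set.indicator_of_notMem (by simp; omega) _

lemma geomHalf_zero : geomHalf {0} = 0 := by
  rw [geomHalf_apply]
  convert tsum_zero with n
  exact Set.indicator_of_notMem (by simp) _

lemma geomHalf_dec (A : Set ℕ) :
    geomHalf {m | 2 ≤ m ∧ m - 1 ∈ A} = 2⁻¹ * geomHalf A := by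
  rw [geomHalf_apply, geomHalf_apply]
  rw [tsum_eq_zero_add' ENNReal.summable]
  have h0 : Set.indicator {m | 2 ≤ m ∧ m - 1 ∈ A} (fun m => ((2:ℝ≥0∞)^m)⁻¹) (0+1) = 0 :=
    Set.indicator_of_notMem (by simp) _
  rw [h0, zero_add, ← ENNReal.tsum_mul_left]
  congr 1
  funext n
  by_cases h : (n+1) ∈ A
  · have hmem : (n+1+1) ∈ {m | 2 ≤ m ∧ m - 1 ∈ A} := ⟨by omega, by simpa using h⟩
    rw [Set.indicator_of_mem hmem, Set.indicator_of_mem h]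
    rw [pow_succ, ENNReal.mul_inv (by simp) (by simp), mul_comm]
  · have hnmem : (n+1+1) ∉ {m | 2 ≤ m ∧ m - 1 ∈ A} := by
      intro hc
      exact h (by simpa using hc.2)
    rw [Set.indicator_of_notMem hnmem, Set.indicator_of_notMem h, mul_zero]

lemma geomHalf_Ici2 : geomHalf {m | 2 ≤ m} = 2⁻¹ := by
  have h : {m : ℕ | 2 ≤ m} = {m | 2 ≤ m ∧ m - 1 ∈ Set.univ} := by ext m; simp
  rw [h, geomHalf_dec, geomHalf_univ, mul_one]

def IIDG (Q : Measure (ℕ → ℕ)) : Prop :=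
  ∀ (m : ℕ) (A : ℕ → Set ℕ),
    Q {k | ∀ i < m, k i ∈ A i} = ∏ i ∈ Finset.range m, geomHalf (A i)

lemma IIDG.univ {Q : Measure (ℕ → ℕ)} (h : IIDG Q) : Q Set.univ = 1 := by
  have h0 := h 0 (fun _ => Set.univ)
  rw [Finset.range_zero, Finset.prod_empty] at h0
  rw [← h0]
  congr 1
  ext k
  simp

lemma marg_measurable (m : ℕ) (A : ℕ → Set ℕ) :
    MeasurableSet {k : ℕ → ℕ | ∀ i < m, k i ∈ A i} := by
  have h : {k : ℕ → ℕ | ∀ i < m, k i ∈ A i} = ⋂ i ∈ Finset.range m, (fun k => k i) ⁻¹' (A i) := by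
    ext k
    simp [Finset.mem_range]
  rw [h]
  exact Set.Finite.measurableSet_biInter (Finset.range m).finite_toSet
    (fun i _ => measurable_pi_apply i (MeasurableSet.of_discrete))

lemma cyl_prob : ∀ (s : List Bool) (Q : Measure (ℕ → ℕ)), IIDG Q →
    Q (Cyl s) = (2⁻¹ : ℝ≥0∞) ^ s.length := by
  intro s
  induction s with
  | nil =>
    intro Q hQ
    rw [List.length_nil, pow_zero]
    exact hQ.univ
  | cons b t ih =>
    intro Q hQ
    cases b with
    | false =>
      set Q' : Measure (ℕ → ℕ) := (2:ℝ≥0∞) • ((Q.restrict {k | 2 ≤ k 0}).map decSeq) with hQ'def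
      have key : ∀ (B : Set (ℕ → ℕ)), MeasurableSet B →
          Q' B = 2 * Q (decSeq ⁻¹' B ∩ {k | 2 ≤ k 0}) := by
        intro B hB
        rw [hQ'def, Measure.smul_apply, Measure.map_apply measurable_decSeq hB,
            Measure.restrict_apply (measurable_decSeq hB), smul_eq_mul]
      have hQE : Q {k | 2 ≤ k 0} = 2⁻¹ := by
        have h1 := hQ 1 (fun _ => {m | 2 ≤ m})
        rw [Finset.prod_range_one, geomHalf_Ici2] at h1
        rw [← h1]
        congr 1
        ext k
        simp [Nat.lt_one_iff]
      have hIID' : IIDG Q' := by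
        intro m A
        rw [key _ (marg_measurable m A)]
        cases m with
        | zero =>
          have hset : decSeq ⁻¹' {k : ℕ → ℕ | ∀ i < 0, k i ∈ A i} ∩ {k | 2 ≤ k 0}
              = {k : ℕ → ℕ | 2 ≤ k 0} := by
            ext k
            simp
          rw [hset, hQE, Finset.range_zero, Finset.prod_empty]
          exact ENNReal.mul_inv_cancel (by norm_num) (by norm_num)
        | succ m =>
          set A' : ℕ → Set ℕ := fun j => Nat.casesOn j {c | 2 ≤ c ∧ c - 1 ∈ A 0} (fun n => A (n+1)) with hA'
          have hset : decSeq ⁻¹' {k : ℕ → ℕ | ∀ i < m+1, k i ∈ A i} ∩ {k | 2 ≤ k 0}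
              = {k : ℕ → ℕ | ∀ i < m+1, k i ∈ A' i} := by
            ext k
            simp only [Set.mem_inter_iff, Set.mem_preimage, Set.mem_setOf_eq]
            constructor
            · rintro ⟨h1, h2⟩ i hi
              cases i with
              | zero => exact ⟨h2, h1 0 hi⟩
              | succ n => exact h1 (n+1) hi
            · intro h
              refine ⟨?_, (h 0 (Nat.succ_pos m)).1⟩
              intro i hi
              cases i with
              | zero => exact (h 0 hi).2
              | succ n => exact h (n+1) hi
          rw [hset, hQ (m+1) A', Finset.prod_range_succ', Finset.prod_range_succ']
          have hA'0 : geomHalf (A' 0) = 2⁻¹ * geomHalf (A 0) := geomHalf_dec (A 0)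
          have hA'succ : ∀ i, geomHalf (A' (i+1)) = geomHalf (A (i+1)) := fun i => rfl
          simp only [hA'succ, hA'0]
          rw [show (2:ℝ≥0∞) * ((∏ i ∈ Finset.range m, geomHalf (A (i+1))) * (2⁻¹ * geomHalf (A 0)))
              = (2 * 2⁻¹) * ((∏ i ∈ Finset.range m, geomHalf (A (i+1))) * geomHalf (A 0)) from by ring,
            ENNReal.mul_inv_cancel (by norm_num) (by norm_num), one_mul]
      have hcyl : Q (Cyl (false :: t)) = 2⁻¹ * Q' (Cyl t) := by
        rw [key _ (cyl_measurable t)]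
        rw [show Cyl (false :: t) = {k : ℕ → ℕ | 2 ≤ k 0} ∩ decSeq ⁻¹' Cyl t from rfl,
          Set.inter_comm, ← mul_assoc,
          ENNReal.inv_mul_cancel (by norm_num) (by norm_num), one_mul]
      rw [hcyl, ih Q' hIID', List.length_cons, pow_succ, mul_comm]
    | true =>
      set Q' : Measure (ℕ → ℕ) := (2:ℝ≥0∞) • ((Q.restrict {k | k 0 = 1}).map shiftSeq) with hQ'def
      have key : ∀ (B : Set (ℕ → ℕ)), MeasurableSet B →
          Q' B = 2 * Q (shiftSeq ⁻¹' B ∩ {k | k 0 = 1}) := by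
        intro B hB
        rw [hQ'def, Measure.smul_apply, Measure.map_apply measurable_shiftSeq hB,
            Measure.restrict_apply (measurable_shiftSeq hB), smul_eq_mul]
      have hIID' : IIDG Q' := by
        intro m A
        rw [key _ (marg_measurable m A)]
        set A' : ℕ → Set ℕ := fun j => Nat.casesOn j {1} A with hA'
        have hset : shiftSeq ⁻¹' {k : ℕ → ℕ | ∀ i < m, k i ∈ A i} ∩ {k | k 0 = 1}
            = {k : ℕ → ℕ | ∀ i < m+1, k i ∈ A' i} := by
          ext k
          simp only [Set.mem_inter_iff, Set.mem_preimage, Set.mem_setOf_eq]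
          constructor
          · rintro ⟨h1, h2⟩ i hi
            cases i with
            | zero => exact h2
            | succ n => exact h1 n (by omega)
          · intro h
            refine ⟨fun i hi => h (i+1) (by omega), h 0 (Nat.succ_pos m)⟩
        rw [hset, hQ (m+1) A', Finset.prod_range_succ']
        have hA'0 : geomHalf (A' 0) = 2⁻¹ := geomHalf_one
        have hA'succ : ∀ i, geomHalf (A' (i+1)) = geomHalf (A i) := fun i => rfl
        simp only [hA'succ, hA'0]
        rw [mul_comm ((∏ i ∈ Finset.range m, geomHalf (A i))) _, ← mul_assoc,
          ENNReal.mul_inv_cancel (by norm_num) (by norm_num), one_mul]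
      have hcyl : Q (Cyl (true :: t)) = 2⁻¹ * Q' (Cyl t) := by
        rw [key _ (cyl_measurable t)]
        rw [show Cyl (true :: t) = {k : ℕ → ℕ | k 0 = 1} ∩ shiftSeq ⁻¹' Cyl t from rfl,
          Set.inter_comm, ← mul_assoc,
          ENNReal.inv_mul_cancel (by norm_num) (by norm_num), one_mul]
      rw [hcyl, ih Q' hIID', List.length_cons, pow_succ, mul_comm]

lemma iidg_of_iid {Ω : Type} [MeasurableSpace Ω] (P : Measure Ω)
    (K : ℕ → Ω → ℕ) (hKm : ∀ i, Measurable (K i))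
    (hInd : iIndepFun K P)
    (hKd : ∀ i, P.map (K i) = geomHalf) :
    IIDG (P.map (fun ω i => K i ω)) := by
  intro m A
  have he : Measurable (fun ω i => K i ω) := measurable_pi_lambda _ hKm
  rw [Measure.map_apply he (marg_measurable m A)]
  have hpre : (fun ω i => K i ω) ⁻¹' {k | ∀ i < m, k i ∈ A i}
      = ⋂ i ∈ Finset.range m, (K i) ⁻¹' (A i) := by
    ext ω
    simp [Finset.mem_range]
  rw [hpre, hInd.measure_inter_preimage_eq_mul (Finset.range m)
    (sets := A) (fun i _ => MeasurableSet.of_discrete)]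
  refine Finset.prod_congr rfl (fun i _ => ?_)
  rw [← hKd i, Measure.map_apply (hKm i) (MeasurableSet.of_discrete)]

lemma valid_ae {Q : Measure (ℕ → ℕ)} (hQ : IIDG Q) : Q {k | ¬ ∀ i, 1 ≤ k i} = 0 := by
  have hsub : {k : ℕ → ℕ | ¬ ∀ i, 1 ≤ k i} ⊆ ⋃ i, {k : ℕ → ℕ | k i = 0} := by
    intro k hk
    push_neg at hk
    obtain ⟨i, hi⟩ := hk
    exact Set.mem_iUnion.mpr ⟨i, show k i = 0 by omega⟩
  refine measure_mono_null hsub (measure_iUnion_null fun i => ?_)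
  have h := hQ (i+1) (fun j => if j = i then {0} else Set.univ)
  have hset : {k : ℕ → ℕ | ∀ j < i+1, k j ∈ (fun j => if j = i then ({0}:Set ℕ) else Set.univ) j}
      = {k : ℕ → ℕ | k i = 0} := by
    ext k
    simp only [Set.mem_setOf_eq]
    constructor
    · intro h
      have := h i (by omega)
      simpa using this
    · intro hk j hj
      by_cases hji : j = i
      · subst hji; simpa using hk
      · simp [if_neg hji]
  rw [hset] at h
  rw [h]
  apply Finset.prod_eq_zero (Finset.self_mem_range_succ i)
  simpa using geomHalf_zero

lemma measurable_conv (n : ℕ) : Measurable (fun k : ℕ → ℕ => conv k n) := by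
  induction n with
  | zero => exact measurable_const
  | succ n ih =>
    have h : (fun k : ℕ → ℕ => conv k (n+1)) = fun k => ((k 0 : ℝ) + conv (shiftSeq k) n)⁻¹ := by
      funext k
      exact conv_succ k n
    rw [h]
    exact (((measurable_from_nat (f := fun m : ℕ => (m:ℝ))).comp (measurable_pi_apply 0)).add
      (ih.comp measurable_shiftSeq)).inv

lemma Q_atom {Q : Measure (ℕ → ℕ)} (hQ : IIDG Q) (q : ℝ) : Q (cfVal ⁻¹' {q}) = 0 := by
  have hbound : ∀ n : ℕ, Q (cfVal ⁻¹' {q}) ≤ (2⁻¹:ℝ≥0∞)^n + 2⁻¹^n := by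
    intro n
    obtain ⟨s₁, s₂, hl1, hl2, hmain⟩ := pair_lemma n q
    have hsub : cfVal ⁻¹' {q} ⊆ (Cyl s₁ ∪ Cyl s₂) ∪ {k | ¬ ∀ i, 1 ≤ k i} := by
      intro k hk
      by_cases hv : ∀ i, 1 ≤ k i
      · left
        obtain ⟨s, hsl, hsc⟩ := cyl_total n k hv
        have hmem : cfVal k ∈ SB s := cfVal_mem_of_cyl hv hsc
        have hq : q ∈ SB s := by
          rw [← show cfVal k = q from hk]
          exact hmem
        rcases hmain s hsl hq with rfl | rfl
        · exact Or.inl hsc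
        · exact Or.inr hsc
      · right
        exact hv
    calc Q (cfVal ⁻¹' {q}) ≤ Q ((Cyl s₁ ∪ Cyl s₂) ∪ {k | ¬ ∀ i, 1 ≤ k i}) := measure_mono hsub
      _ ≤ Q (Cyl s₁ ∪ Cyl s₂) + Q {k | ¬∀ i, 1 ≤ k i} := measure_union_le _ _
      _ = Q (Cyl s₁ ∪ Cyl s₂) := by rw [valid_ae hQ, add_zero]
      _ ≤ Q (Cyl s₁) + Q (Cyl s₂) := measure_union_le _ _
      _ = 2⁻¹^n + 2⁻¹^n := by rw [cyl_prob s₁ Q hQ, cyl_prob s₂ Q hQ, hl1, hl2]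
  have htend : Tendsto (fun n : ℕ => (2⁻¹:ℝ≥0∞)^n + 2⁻¹^n) atTop (nhds 0) := by
    have h := ENNReal.tendsto_pow_atTop_nhds_zero_of_lt_one
      (by norm_num : (2⁻¹:ℝ≥0∞) < 1)
    simpa using h.add h
  exact le_antisymm (ge_of_tendsto htend (Eventually.of_forall hbound)) zero_le

lemma Q_SB {Q : Measure (ℕ → ℕ)} (hQ : IIDG Q) (s : List Bool) :
    Q (cfVal ⁻¹' SB s) = (2⁻¹:ℝ≥0∞) ^ s.length := by
  have hlow : (2⁻¹:ℝ≥0∞) ^ s.length ≤ Q (cfVal ⁻¹' SB s) := by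
    rw [← cyl_prob s Q hQ]
    have hsub : Cyl s ⊆ cfVal ⁻¹' SB s ∪ {k | ¬ ∀ i, 1 ≤ k i} := by
      intro k hk
      by_cases hv : ∀ i, 1 ≤ k i
      · exact Or.inl (cfVal_mem_of_cyl hv hk)
      · exact Or.inr hv
    calc Q (Cyl s) ≤ Q (cfVal ⁻¹' SB s ∪ {k | ¬ ∀ i, 1 ≤ k i}) := measure_mono hsub
      _ ≤ Q (cfVal ⁻¹' SB s) + Q {k | ¬ ∀ i, 1 ≤ k i} := measure_union_le _ _
      _ = Q (cfVal ⁻¹' SB s) := by rw [valid_ae hQ, add_zero]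
  have hup : Q (cfVal ⁻¹' SB s) ≤ (2⁻¹:ℝ≥0∞) ^ s.length := by
    have hsub : cfVal ⁻¹' SB s ⊆
        ((Cyl s ∪ cfVal ⁻¹' {lo s}) ∪ cfVal ⁻¹' {hi s}) ∪ {k | ¬ ∀ i, 1 ≤ k i} := by
      intro k hk
      by_cases hv : ∀ i, 1 ≤ k i
      · left
        obtain ⟨s', hsl, hsc⟩ := cyl_total s.length k hv
        by_cases hss : s' = s
        · subst hss
          exact Or.inl (Or.inl hsc)
        · have hmem : cfVal k ∈ SB s' := cfVal_mem_of_cyl hv hsc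
          have hne : s ≠ s' := fun h => hss h.symm
          rcases SB_inter_endpoint s s' hsl.symm hne (cfVal k) hk hmem with h | h
          · exact Or.inl (Or.inr h)
          · exact Or.inr h
      · right
        exact hv
    calc Q (cfVal ⁻¹' SB s)
        ≤ Q (((Cyl s ∪ cfVal ⁻¹' {lo s}) ∪ cfVal ⁻¹' {hi s}) ∪ {k | ¬ ∀ i, 1 ≤ k i}) :=
          measure_mono hsub
      _ ≤ Q ((Cyl s ∪ cfVal ⁻¹' {lo s}) ∪ cfVal ⁻¹' {hi s}) + Q {k | ¬ ∀ i, 1 ≤ k i} :=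
          measure_union_le _ _
      _ ≤ (Q (Cyl s ∪ cfVal ⁻¹' {lo s}) + Q (cfVal ⁻¹' {hi s})) + Q {k | ¬ ∀ i, 1 ≤ k i} := by
          gcongr
          exact measure_union_le _ _
      _ ≤ ((Q (Cyl s) + Q (cfVal ⁻¹' {lo s})) + Q (cfVal ⁻¹' {hi s})) + Q {k | ¬ ∀ i, 1 ≤ k i} := by
          gcongr
          exact measure_union_le _ _
      _ = Q (Cyl s) := by rw [Q_atom hQ, Q_atom hQ, valid_ae hQ, add_zero, add_zero, add_zero]
      _ = (2⁻¹:ℝ≥0∞) ^ s.length := cyl_prob s Q hQ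
  exact le_antisymm hup hlow

lemma Q_out {Q : Measure (ℕ → ℕ)} (hQ : IIDG Q) :
    Q (cfVal ⁻¹' (Set.Icc (0:ℝ) 1)ᶜ) = 0 := by
  have hsub : cfVal ⁻¹' (Set.Icc (0:ℝ) 1)ᶜ ⊆ {k | ¬ ∀ i, 1 ≤ k i} := by
    intro k hk
    by_cases hv : ∀ i, 1 ≤ k i
    · exact absurd (cfVal_mem hv) hk
    · exact hv
  exact measure_mono_null hsub (valid_ae hQ)

lemma SB_measurable (s : List Bool) : MeasurableSet (SB s) := measurableSet_Icc

lemma HMap2_apply (x : ℝ) : HMap 2 x = 1 - x := by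
  simp [HMap]

lemma HMap3_apply (x : ℝ) : HMap 3 x = min (x / (1 - x)) ((1 - x) / x) := by
  simp [HMap]

lemma measurable_HMap2 : Measurable (HMap 2) := by
  have h : HMap 2 = fun x : ℝ => 1 - x := funext HMap2_apply
  rw [h]
  exact measurable_const.sub measurable_id

lemma measurable_HMap3 : Measurable (HMap 3) := by
  have h : HMap 3 = fun x : ℝ => min (x / (1 - x)) ((1 - x) / x) := funext HMap3_apply
  rw [h]
  exact (measurable_id.div (measurable_const.sub measurable_id)).min
    ((measurable_const.sub measurable_id).div measurable_id)

lemma HMap3_left {x : ℝ} (h0 : 0 ≤ x) (h1 : x ≤ 1/2) : HMap 3 x = x / (1 - x) := by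
  rw [HMap3_apply, min_eq_left]
  rcases eq_or_lt_of_le h0 with h | h
  · rw [← h]
    norm_num
  · rw [div_le_div_iff₀ (by linarith) h]
    nlinarith

lemma HMap3_right {x : ℝ} (h0 : 1/2 ≤ x) (h1 : x ≤ 1) : HMap 3 x = (1 - x) / x := by
  rw [HMap3_apply, min_eq_right]
  rcases eq_or_lt_of_le h1 with h | h
  · rw [h]
    norm_num
  · rw [div_le_div_iff₀ (by linarith) (by linarith)]
    nlinarith

lemma H2_preim_SB (s : List Bool) :
    (HMap 2) ⁻¹' SB (true :: s) = SB (false :: s) := by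
  ext x
  simp only [Set.mem_preimage, SB, Set.mem_Icc, HMap2_apply, lo_true, hi_true, lo_false, hi_false]
  have ha := g0_add_g1 (lo_nonneg s)
  have hb := g0_add_g1 (le_trans (lo_nonneg s) (lo_le_hi s))
  constructor <;> rintro ⟨u, v⟩ <;> constructor <;> linarith

lemma H3_preim_SB (s : List Bool) :
    (HMap 3) ⁻¹' SB s ∩ Set.Icc (0:ℝ) 1 = SB (false :: s) ∪ SB (true :: s) := by
  ext x
  simp only [Set.mem_inter_iff, Set.mem_preimage, Set.mem_union, Set.mem_Icc]
  constructor
  · rintro ⟨hmem, hx0, hx1⟩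
    rcases le_or_gt x (1/2) with hle | hlt
    · left
      rw [HMap3_left hx0 hle] at hmem
      exact mem_SB_false.mpr ⟨hx0, hle, hmem⟩
    · right
      rw [HMap3_right (le_of_lt hlt) hx1] at hmem
      exact mem_SB_true.mpr ⟨le_of_lt hlt, hx1, hmem⟩
  · rintro (h | h)
    · obtain ⟨hx0, hxh, hy⟩ := mem_SB_false.mp h
      refine ⟨?_, hx0, by linarith⟩
      rw [HMap3_left hx0 hxh]
      exact hy
    · obtain ⟨hxh, hx1, hy⟩ := mem_SB_true.mp h
      refine ⟨?_, by linarith, hx1⟩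
      rw [HMap3_right hxh hx1]
      exact hy

lemma nu_SB (ν : Measure ℝ) [IsProbabilityMeasure ν]
    (hsupp : ν (Set.Icc (0 : ℝ) 1)ᶜ = 0)
    (hatomless : ∀ x : ℝ, ν {x} = 0)
    (h2 : ν.map (HMap 2) = ν) (h3 : ν.map (HMap 3) = ν) :
    ∀ s : List Bool, ν (SB s) = (2⁻¹:ℝ≥0∞) ^ s.length := by
  have hint : ∀ A : Set ℝ, ν (A ∩ Set.Icc 0 1) = ν A := by
    intro A
    refine le_antisymm (measure_mono Set.inter_subset_left) ?_
    calc ν A ≤ ν (A ∩ Set.Icc 0 1) + ν (A \ Set.Icc 0 1) := measure_le_inter_add_diff _ _ _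
      _ = ν (A ∩ Set.Icc 0 1) := by
          have hnull : ν (A \ Set.Icc 0 1) = 0 :=
            measure_mono_null (fun x hx => hx.2) hsupp
          rw [hnull, add_zero]
  intro s
  induction s with
  | nil =>
    rw [List.length_nil, pow_zero]
    have h1 : ν (Set.Icc (0:ℝ) 1) = 1 := by
      have h := hint Set.univ
      rw [Set.univ_inter] at h
      rw [h, measure_univ]
    exact h1
  | cons b t ih =>
    have key : ν (SB (false :: t)) + ν (SB (true :: t)) = (2⁻¹:ℝ≥0∞)^t.length := by
      have had : ν (SB (false :: t) ∩ SB (true :: t)) = 0 := by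
        have hsub : SB (false :: t) ∩ SB (true :: t) ⊆ {(1/2 : ℝ)} := by
          rintro x ⟨hx1, hx2⟩
          have hu := (mem_SB_false.mp hx1).2.1
          have hv := (mem_SB_true.mp hx2).1
          simp only [Set.mem_singleton_iff]
          linarith
        exact measure_mono_null hsub (hatomless _)
      have hnm : NullMeasurableSet (SB (true :: t)) ν := (SB_measurable _).nullMeasurableSet
      rw [← measure_union₀ hnm had]
      rw [← H3_preim_SB t, hint,
        ← Measure.map_apply measurable_HMap3 (SB_measurable t), h3]
      exact ih
    have hsym : ν (SB (true :: t)) = ν (SB (false :: t)) := by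
      conv_lhs => rw [← h2]
      rw [Measure.map_apply measurable_HMap2 (SB_measurable (true :: t)),
        H2_preim_SB]
    rw [hsym] at key
    have h2a : (2:ℝ≥0∞) * ν (SB (false :: t)) = (2⁻¹:ℝ≥0∞)^t.length := by
      rw [two_mul]
      exact key
    have hval : ν (SB (false :: t)) = (2⁻¹:ℝ≥0∞)^(t.length + 1) := by
      have h := congrArg (fun z => (2:ℝ≥0∞)⁻¹ * z) h2a
      rw [← mul_assoc, ENNReal.inv_mul_cancel (by norm_num) (by norm_num), one_mul] at h
      rw [h, pow_succ, mul_comm]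
    cases b
    · rw [List.length_cons]
      exact hval
    · rw [List.length_cons, hsym]
      exact hval

lemma Iic_hi_eq (m : Measure ℝ) (hatom : ∀ x : ℝ, m {x} = 0)
    (hSB : ∀ s : List Bool, m (SB s) = (2⁻¹:ℝ≥0∞)^s.length) (s : List Bool) :
    m (Set.Iic (hi s)) = m (Set.Iic (lo s)) + (2⁻¹:ℝ≥0∞)^s.length := by
  have hIoc : m (Set.Ioc (lo s) (hi s)) = (2⁻¹:ℝ≥0∞)^s.length := by
    refine le_antisymm ?_ ?_
    · rw [← hSB s]
      exact measure_mono Set.Ioc_subset_Icc_self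
    · rw [← hSB s]
      have hsub : SB s ⊆ {lo s} ∪ Set.Ioc (lo s) (hi s) := by
        intro x hx
        rcases eq_or_lt_of_le hx.1 with h | h
        · left
          exact h.symm
        · right
          exact ⟨h, hx.2⟩
      calc m (SB s) ≤ m ({lo s} ∪ Set.Ioc (lo s) (hi s)) := measure_mono hsub
        _ ≤ m {lo s} + m (Set.Ioc (lo s) (hi s)) := measure_union_le _ _
        _ = m (Set.Ioc (lo s) (hi s)) := by rw [hatom, zero_add]
  rw [← Set.Iic_union_Ioc_eq_Iic (lo_le_hi s),
    measure_union (Set.Iic_disjoint_Ioc le_rfl) measurableSet_Ioc, hIoc]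

lemma Iic_zero (m : Measure ℝ) (hatom : ∀ x : ℝ, m {x} = 0)
    (hout : m (Set.Icc (0:ℝ) 1)ᶜ = 0) : m (Set.Iic (0:ℝ)) = 0 := by
  have hsub : Set.Iic (0:ℝ) ⊆ {(0:ℝ)} ∪ (Set.Icc (0:ℝ) 1)ᶜ := by
    intro x hx
    have hx' : x ≤ 0 := hx
    rcases eq_or_lt_of_le hx' with h | h
    · left
      exact h
    · right
      intro hic
      exact absurd hic.1 (not_le.mpr h)
  refine le_antisymm ?_ zero_le
  calc m (Set.Iic (0:ℝ)) ≤ m ({(0:ℝ)} ∪ (Set.Icc (0:ℝ) 1)ᶜ) := measure_mono hsub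
    _ ≤ m {(0:ℝ)} + m (Set.Icc (0:ℝ) 1)ᶜ := measure_union_le _ _
    _ = 0 := by rw [hatom, hout, add_zero]

lemma Iic_big (m : Measure ℝ) (hu : m Set.univ = 1)
    (hout : m (Set.Icc (0:ℝ) 1)ᶜ = 0) {x : ℝ} (hx : 1 ≤ x) : m (Set.Iic x) = 1 := by
  refine le_antisymm (by rw [← hu]; exact measure_mono (Set.subset_univ _)) ?_
  have hsub : (Set.univ : Set ℝ) ⊆ Set.Iic x ∪ (Set.Icc (0:ℝ) 1)ᶜ := by
    intro y _
    by_cases hy : y ≤ x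
    · exact Or.inl hy
    · right
      intro hic
      exact hy (le_trans hic.2 hx)
  calc (1:ℝ≥0∞) = m Set.univ := hu.symm
    _ ≤ m (Set.Iic x ∪ (Set.Icc (0:ℝ) 1)ᶜ) := measure_mono hsub
    _ ≤ m (Set.Iic x) + m (Set.Icc (0:ℝ) 1)ᶜ := measure_union_le _ _
    _ = m (Set.Iic x) := by rw [hout, add_zero]

lemma Iic_eq_of_SB (ν' μ' : Measure ℝ)
    (hν'u : ν' Set.univ = 1) (hμ'u : μ' Set.univ = 1)
    (hν'out : ν' (Set.Icc (0:ℝ) 1)ᶜ = 0) (hμ'out : μ' (Set.Icc (0:ℝ) 1)ᶜ = 0)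
    (hν'atom : ∀ x : ℝ, ν' {x} = 0) (hμ'atom : ∀ x : ℝ, μ' {x} = 0)
    (hν'SB : ∀ s : List Bool, ν' (SB s) = (2⁻¹:ℝ≥0∞)^s.length)
    (hμ'SB : ∀ s : List Bool, μ' (SB s) = (2⁻¹:ℝ≥0∞)^s.length) :
    ∀ a : ℝ, ν' (Set.Iic a) = μ' (Set.Iic a) := by
  have hend : ∀ (n : ℕ) (s : List Bool), s.length = n →
      ν' (Set.Iic (lo s)) = μ' (Set.Iic (lo s)) ∧ ν' (Set.Iic (hi s)) = μ' (Set.Iic (hi s)) := by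
    intro n
    induction n with
    | zero =>
      intro s hs
      have hnil : s = [] := List.length_eq_zero_iff.mp hs
      subst hnil
      constructor
      · rw [lo_nil, Iic_zero ν' hν'atom hν'out, Iic_zero μ' hμ'atom hμ'out]
      · rw [hi_nil, Iic_big ν' hν'u hν'out le_rfl, Iic_big μ' hμ'u hμ'out le_rfl]
    | succ n ih =>
      intro s hs
      rcases List.eq_nil_or_concat' s with rfl | ⟨t, b, rfl⟩
      · simp at hs
      have hlt : t.length = n := by simpa using hs
      obtain ⟨hl, hh⟩ := ih t hlt
      have hmidν : ν' (Set.Iic (hi (t ++ [false])))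
          = ν' (Set.Iic (lo (t ++ [false]))) + (2⁻¹:ℝ≥0∞)^(n+1) := by
        have := Iic_hi_eq ν' hν'atom hν'SB (t ++ [false])
        rwa [show (t ++ [false]).length = n + 1 by simp [hlt]] at this
      have hmidμ : μ' (Set.Iic (hi (t ++ [false])))
          = μ' (Set.Iic (lo (t ++ [false]))) + (2⁻¹:ℝ≥0∞)^(n+1) := by
        have := Iic_hi_eq μ' hμ'atom hμ'SB (t ++ [false])
        rwa [show (t ++ [false]).length = n + 1 by simp [hlt]] at this
      have hmidν' : ν' (Set.Iic (hi (t ++ [true])))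
          = ν' (Set.Iic (lo (t ++ [true]))) + (2⁻¹:ℝ≥0∞)^(n+1) := by
        have := Iic_hi_eq ν' hν'atom hν'SB (t ++ [true])
        rwa [show (t ++ [true]).length = n + 1 by simp [hlt]] at this
      have hmidμ' : μ' (Set.Iic (hi (t ++ [true])))
          = μ' (Set.Iic (lo (t ++ [true]))) + (2⁻¹:ℝ≥0∞)^(n+1) := by
        have := Iic_hi_eq μ' hμ'atom hμ'SB (t ++ [true])
        rwa [show (t ++ [true]).length = n + 1 by simp [hlt]] at this
      rcases lo_hi_append t with ⟨e1, e2, e3⟩ | ⟨e1, e2, e3⟩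
      · -- lo t0 = lo t, hi t0 = lo t1, hi t1 = hi t
        have hq0 : ν' (Set.Iic (lo (t ++ [false]))) = μ' (Set.Iic (lo (t ++ [false]))) := by
          rw [e1]; exact hl
        have hq1 : ν' (Set.Iic (hi (t ++ [false]))) = μ' (Set.Iic (hi (t ++ [false]))) := by
          rw [hmidν, hmidμ, hq0]
        cases b
        · exact ⟨hq0, hq1⟩
        · refine ⟨?_, ?_⟩
          · rw [← e2]; exact hq1
          · rw [e3]; exact hh
      · -- lo t1 = lo t, hi t1 = lo t0, hi t0 = hi t
        have hq0 : ν' (Set.Iic (lo (t ++ [true]))) = μ' (Set.Iic (lo (t ++ [true]))) := by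
          rw [e1]; exact hl
        have hq1 : ν' (Set.Iic (hi (t ++ [true]))) = μ' (Set.Iic (hi (t ++ [true]))) := by
          rw [hmidν', hmidμ', hq0]
        cases b
        · refine ⟨?_, ?_⟩
          · rw [← e2]; exact hq1
          · rw [e3]; exact hh
        · exact ⟨hq0, hq1⟩
  intro a
  rcases lt_or_ge a 0 with ha | ha0
  · have hν0 : ν' (Set.Iic a) = 0 := by
      refine measure_mono_null ?_ hν'out
      intro x hx
      intro hic
      exact absurd hic.1 (not_le.mpr (lt_of_le_of_lt hx ha))
    have hμ0 : μ' (Set.Iic a) = 0 := by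
      refine measure_mono_null ?_ hμ'out
      intro x hx
      intro hic
      exact absurd hic.1 (not_le.mpr (lt_of_le_of_lt hx ha))
    rw [hν0, hμ0]
  rcases le_or_gt 1 a with ha1 | ha1
  · rw [Iic_big ν' hν'u hν'out ha1, Iic_big μ' hμ'u hμ'out ha1]
  -- 0 ≤ a < 1
  have hmem : a ∈ Set.Icc (0:ℝ) 1 := ⟨ha0, ha1.le⟩
  have hbound : ∀ m₁ m₂ : Measure ℝ,
      (∀ x : ℝ, m₁ {x} = 0) → (∀ s : List Bool, m₁ (SB s) = (2⁻¹:ℝ≥0∞)^s.length) →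
      (∀ s : List Bool, m₁ (Set.Iic (lo s)) = m₂ (Set.Iic (lo s))) →
      ∀ n : ℕ, m₁ (Set.Iic a) ≤ m₂ (Set.Iic a) + (2⁻¹:ℝ≥0∞)^n := by
    intro m₁ m₂ hat hSB₁ hloeq n
    obtain ⟨s, hsl, hsa⟩ := exists_SB hmem n
    calc m₁ (Set.Iic a) ≤ m₁ (Set.Iic (hi s)) := measure_mono (Set.Iic_subset_Iic.mpr hsa.2)
      _ = m₁ (Set.Iic (lo s)) + (2⁻¹:ℝ≥0∞)^n := by rw [Iic_hi_eq m₁ hat hSB₁ s, hsl]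
      _ = m₂ (Set.Iic (lo s)) + (2⁻¹:ℝ≥0∞)^n := by rw [hloeq s]
      _ ≤ m₂ (Set.Iic a) + (2⁻¹:ℝ≥0∞)^n := by
          gcongr
          exact hsa.1
  have hle : ∀ m₁ m₂ : Measure ℝ,
      (∀ n : ℕ, m₁ (Set.Iic a) ≤ m₂ (Set.Iic a) + (2⁻¹:ℝ≥0∞)^n) →
      m₁ (Set.Iic a) ≤ m₂ (Set.Iic a) := by
    intro m₁ m₂ hb
    refine ENNReal.le_of_forall_pos_le_add fun ε hε hfin => ?_
    obtain ⟨n, hn⟩ := ENNReal.exists_inv_two_pow_lt (show ((ε:ℝ≥0∞)) ≠ 0 by exact_mod_cast hε.ne')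
    calc m₁ (Set.Iic a) ≤ m₂ (Set.Iic a) + (2⁻¹:ℝ≥0∞)^n := hb n
      _ ≤ m₂ (Set.Iic a) + ε := add_le_add_right hn.le _
  refine le_antisymm
    (hle ν' μ' (hbound ν' μ' hν'atom hν'SB (fun s => (hend s.length s rfl).1)))
    (hle μ' ν' (hbound μ' ν' hμ'atom hμ'SB (fun s => ((hend s.length s rfl).1).symm)))

end Stmt9

theorem stmt9 (ν : Measure ℝ) [IsProbabilityMeasure ν]
    (hsupp : ν (Set.Icc (0 : ℝ) 1)ᶜ = 0)
    (hatomless : ∀ x : ℝ, ν {x} = 0)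
    (h2 : ν.map (HMap 2) = ν) (h3 : ν.map (HMap 3) = ν)
    (μ : Measure ℝ) (hμ : IsMuStar μ) :
    ν = μ := by
  obtain ⟨Ω, mΩ, P, K, hP, hKm, hInd, hKd, hμeq⟩ := hμ
  have he : Measurable (fun ω i => K i ω) := measurable_pi_lambda _ hKm
  set Q : Measure (ℕ → ℕ) := P.map (fun ω i => K i ω) with hQdef
  have hQ : Stmt9.IIDG Q := Stmt9.iidg_of_iid P K hKm hInd hKd
  have haem : AEMeasurable cfVal Q := by
    apply aemeasurable_of_tendsto_metrizable_ae' (f := fun n k => Stmt9.conv k n)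
      (fun n => (Stmt9.measurable_conv n).aemeasurable)
    have hv : Q {k | ¬ ∀ i, 1 ≤ k i} = 0 := Stmt9.valid_ae hQ
    rw [MeasureTheory.ae_iff]
    refine measure_mono_null ?_ hv
    intro k hk hval
    exact hk (Stmt9.conv_tendsto hval)
  have hμQ : μ = Q.map cfVal := by
    rw [hμeq, hQdef, AEMeasurable.map_map_of_aemeasurable haem he.aemeasurable]
    rfl
  have hμap : ∀ (A : Set ℝ), MeasurableSet A → μ A = Q (cfVal ⁻¹' A) := by
    intro A hA
    rw [hμQ, Measure.map_apply_of_aemeasurable haem hA]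
  have hμSB : ∀ s : List Bool, μ (Stmt9.SB s) = (2⁻¹:ℝ≥0∞) ^ s.length := by
    intro s
    rw [hμap _ (Stmt9.SB_measurable s), Stmt9.Q_SB hQ]
  have hμatom : ∀ x : ℝ, μ {x} = 0 := fun x => by
    rw [hμap _ (measurableSet_singleton x)]
    exact Stmt9.Q_atom hQ x
  have hμout : μ (Set.Icc (0:ℝ) 1)ᶜ = 0 := by
    rw [hμap _ measurableSet_Icc.compl]
    exact Stmt9.Q_out hQ
  have hμuniv : μ Set.univ = 1 := by
    rw [hμap _ MeasurableSet.univ, Set.preimage_univ]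
    exact hQ.univ
  have hνSB := Stmt9.nu_SB ν hsupp hatomless h2 h3
  refine Measure.ext_of_Iic ν μ ?_
  exact Stmt9.Iic_eq_of_SB ν μ measure_univ hμuniv hsupp hμout hatomless hμatom hνSB hμSB
end
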